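/- Let A = (a_{ij}) be an n×n real matrix such that D(A) belongs to the class 𝒟, D(A) is strongly connected, and Δ_A ≠ 0. Let B = (b_{ij}) be the n×n matrix with entries b_{ij} = μ_{ij}/Δ_A. Then AB = BA; equivalently, Σ_{k=1}^n a_{ik} μ_{kj} = Σ_{l=1}^n μ_{il} a_{lj} for all i, j ∈ {1,…,n}. -/

import Mathlib

open Matrix

/-- Adjacency in a digraph given by relation `G`: a 2-cycle between distinct `i` and `j`. -/
def Adjd {n : ℕ} (G : Fin n → Fin n → Prop) (i j : Fin n) : Prop :=
  i ≠ j ∧ G i j ∧ G j i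

/-- `G` is a simple symmetric digraph: no loops and edges come in both directions. -/
def IsSSD {n : ℕ} (G : Fin n → Fin n → Prop) : Prop :=
  (∀ i, ¬ G i i) ∧ ∀ i j, G i j → G j i

/-- A vertex is pendant if it is incident to exactly one 2-cycle. -/
def Pendant {n : ℕ} (G : Fin n → Fin n → Prop) (i : Fin n) : Prop :=
  ∃! j, Adjd G i j

/-- The class 𝒟: simple symmetric digraphs in which every non-pendant vertex is
adjacent to at least one pendant vertex. -/
def InClassD {n : ℕ} (G : Fin n → Fin n → Prop) : Prop :=
  IsSSD G ∧ ∀ i, ¬ Pendant G i → ∃ j, Adjd G i j ∧ Pendant G j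

/-- Strong connectivity: a directed path from every vertex to every other vertex. -/
def StronglyConnected {n : ℕ} (G : Fin n → Fin n → Prop) : Prop :=
  ∀ i j : Fin n, Relation.ReflTransGen G i j

/-- An unordered pair `e` is a 2-cycle of `G`. -/
def IsEdge {n : ℕ} (G : Fin n → Fin n → Prop) (e : Sym2 (Fin n)) : Prop :=
  ∃ i j, e = s(i, j) ∧ Adjd G i j

/-- A matching: a set of pairwise vertex-disjoint 2-cycles. -/
def IsMatching {n : ℕ} (G : Fin n → Fin n → Prop) (M : Finset (Sym2 (Fin n))) : Prop :=
  (∀ e ∈ M, IsEdge G e) ∧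
  ∀ e ∈ M, ∀ f ∈ M, e ≠ f → ∀ v : Fin n, v ∈ e → v ∉ f

/-- A maximum matching: a matching of maximum cardinality. -/
def IsMaxMatching {n : ℕ} (G : Fin n → Fin n → Prop) (M : Finset (Sym2 (Fin n))) : Prop :=
  IsMatching G M ∧ ∀ M', IsMatching G M' → M'.card ≤ M.card

/-- A cycle chain, recorded by its list of (distinct) vertices `i₁, …, i_{m+1}`. -/
def IsCycleChain {n : ℕ} (G : Fin n → Fin n → Prop) (c : List (Fin n)) : Prop :=
  c.Nodup ∧ 2 ≤ c.length ∧ c.Chain' (Adjd G)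

/-- A cycle chain from `i` to `j`. -/
def IsCycleChainBtw {n : ℕ} (G : Fin n → Fin n → Prop) (i j : Fin n) (c : List (Fin n)) : Prop :=
  IsCycleChain G c ∧ c.head? = some i ∧ c.getLast? = some j

/-- The list of 2-cycles of a cycle chain. -/
def chainEdges {n : ℕ} (c : List (Fin n)) : List (Sym2 (Fin n)) :=
  List.zipWith (fun a b => s(a, b)) c c.tail

/-- The cycle chain `c` is alternating with respect to `M`: its 2-cycles are alternately
in `M` and outside `M`, with the first and last 2-cycle in `M` (so its length is odd). -/
def IsAltChain {n : ℕ} (M : Finset (Sym2 (Fin n))) (c : List (Fin n)) : Prop :=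
  Odd (chainEdges c).length ∧
  ∀ k (h : k < (chainEdges c).length), ((chainEdges c).get ⟨k, h⟩ ∈ M ↔ Even k)

/-- The digraph of a square matrix: edge `(i,j)` iff `A i j ≠ 0`. -/
def DA {n : ℕ} (A : Matrix (Fin n) (Fin n) ℝ) : Fin n → Fin n → Prop :=
  fun i j => A i j ≠ 0

/-- The cycle product `a_{ij} a_{ji}` of a 2-cycle. -/
def cycProd {n : ℕ} (A : Matrix (Fin n) (Fin n) ℝ) (e : Sym2 (Fin n)) : ℝ :=
  Sym2.lift ⟨fun i j => A i j * A j i, fun i j => mul_comm _ _⟩ e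

/-- The matching product η(M) of a matching `M`. -/
noncomputable def matchProd {n : ℕ} (A : Matrix (Fin n) (Fin n) ℝ)
    (M : Finset (Sym2 (Fin n))) : ℝ :=
  ∏ e ∈ M, cycProd A e

/-- The (finite) collection of all maximum matchings of `D(A)`. -/
noncomputable def maxMatchings {n : ℕ} (A : Matrix (Fin n) (Fin n) ℝ) :
    Finset (Finset (Sym2 (Fin n))) :=
  {M | IsMaxMatching (DA A) M}.toFinite.toFinset

/-- Δ_A: the sum of the matching products over all maximum matchings of `D(A)`. -/
noncomputable def Delta {n : ℕ} (A : Matrix (Fin n) (Fin n) ℝ) : ℝ :=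
  ∑ M ∈ maxMatchings A, matchProd A M

/-- 𝕄(i,j): maximum matchings with respect to which some cycle chain from `i` to `j`
is an alternating cycle chain. -/
def MMset {n : ℕ} (A : Matrix (Fin n) (Fin n) ℝ) (i j : Fin n) :
    Set (Finset (Sym2 (Fin n))) :=
  {M | IsMaxMatching (DA A) M ∧ ∃ c, IsCycleChainBtw (DA A) i j c ∧ IsAltChain M c}

/-- `i` and `j` are maximally matchable: 𝕄(i,j) ≠ ∅. -/
def MaxMatchable {n : ℕ} (A : Matrix (Fin n) (Fin n) ℝ) (i j : Fin n) : Prop :=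
  (MMset A i j).Nonempty

open scoped Classical in
/-- The (unique) alternating cycle chain from `i` to `j`, when it exists. -/
noncomputable def theChain {n : ℕ} (A : Matrix (Fin n) (Fin n) ℝ) (i j : Fin n) :
    List (Fin n) :=
  if h : ∃ c, IsCycleChainBtw (DA A) i j c ∧ ∃ M ∈ MMset A i j, IsAltChain M c
  then h.choose else []

/-- The path product along a cycle chain: `a_{i₁ i₂} a_{i₂ i₃} ⋯ a_{i_m i_{m+1}}`. -/
def pathProd {n : ℕ} (A : Matrix (Fin n) (Fin n) ℝ) (c : List (Fin n)) : ℝ :=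
  (List.zipWith (fun a b => A a b) c c.tail).prod

open scoped Classical in
/-- β_{ij} = (−1)^{(m−1)/2} P_m(i,j) for maximally matchable `i, j`, and `0` otherwise. -/
noncomputable def beta {n : ℕ} (A : Matrix (Fin n) (Fin n) ℝ) (i j : Fin n) : ℝ :=
  if MaxMatchable A i j then
    (-1 : ℝ) ^ (((theChain A i j).length - 2) / 2) * pathProd A (theChain A i j)
  else 0

/-- β̄_{i,j}(M): product of the cycle products of the 2-cycles of `M` not contained in
the alternating cycle chain from `i` to `j`. -/
noncomputable def betaBar {n : ℕ} (A : Matrix (Fin n) (Fin n) ℝ) (i j : Fin n)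
    (M : Finset (Sym2 (Fin n))) : ℝ :=
  ∏ e ∈ M.filter (fun e => e ∉ chainEdges (theChain A i j)), cycProd A e

/-- μ_{ij} = β_{ij} · Σ_{M ∈ 𝕄(i,j)} β̄_{i,j}(M). -/
noncomputable def mu {n : ℕ} (A : Matrix (Fin n) (Fin n) ℝ) (i j : Fin n) : ℝ :=
  beta A i j * ∑ M ∈ (MMset A i j).toFinite.toFinset, betaBar A i j M

/-- `X` is a group inverse of `A`. -/
def IsGroupInverse {n : ℕ} (A X : Matrix (Fin n) (Fin n) ℝ) : Prop :=
  A * X * A = A ∧ X * A * X = X ∧ A * X = X * A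

/-- A tree digraph: strongly connected and all of its cycles have length 2. -/
def IsTreeDigraph {n : ℕ} (G : Fin n → Fin n → Prop) : Prop :=
  StronglyConnected G ∧
  ∀ (a : Fin n) (l : List (Fin n)), (a :: l).Nodup → List.Chain G a l →
    G ((a :: l).getLast (List.cons_ne_nil a l)) a → (a :: l).length = 2

/-- A star tree digraph: a tree digraph with a center adjacent to every other vertex,
every other vertex being adjacent only to the center. -/
def IsStarTree {n : ℕ} (G : Fin n → Fin n → Prop) : Prop :=
  IsTreeDigraph G ∧
  ∃ c : Fin n, (∀ j, j ≠ c → Adjd G c j) ∧ ∀ i j, Adjd G i j → i = c ∨ j = c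

/-- A corona digraph: a simple symmetric digraph in which each non-pendant vertex is
adjacent to exactly one pendant vertex. -/
def IsCorona {n : ℕ} (G : Fin n → Fin n → Prop) : Prop :=
  IsSSD G ∧ ∀ i, ¬ Pendant G i → ∃! j, Adjd G i j ∧ Pendant G j

/-- 𝕄(i): the maximum matchings in which vertex `i` is matched. -/
noncomputable def MMi {n : ℕ} (A : Matrix (Fin n) (Fin n) ℝ) (i : Fin n) :
    Finset (Finset (Sym2 (Fin n))) :=
  {M | IsMaxMatching (DA A) M ∧ ∃ e ∈ M, i ∈ e}.toFinite.toFinset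

section Basics
variable {n : ℕ}

lemma Adjd.symm' {G : Fin n → Fin n → Prop} {i j : Fin n} (h : Adjd G i j) : Adjd G j i :=
  ⟨h.1.symm, h.2.2, h.2.1⟩

lemma no_chain_self {G : Fin n → Fin n → Prop} {i : Fin n} {c : List (Fin n)}
    (h : IsCycleChainBtw G i i c) : False := by
  obtain ⟨⟨hnd, hlen, _⟩, hhead, hlast⟩ := h
  match c, hhead with
  | (a :: t), hhead =>
    have ha : a = i := by simpa using hhead
    subst ha
    match t, hlast with
    | [], _ => simp at hlen
    | (b :: t'), hlast =>
      have hmem : a ∈ b :: t' := by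
        have h1 : (b :: t').getLast? = some a := by
          rw [← hlast]; simp [List.getLast?_cons_cons]
        obtain ⟨hne, heq⟩ := List.mem_getLast?_eq_getLast (x := a) (l := b :: t') h1
        rw [heq]; exact List.getLast_mem hne
      exact (List.nodup_cons.mp hnd).1 hmem

lemma not_maxMatchable_self (A : Matrix (Fin n) (Fin n) ℝ) (i : Fin n) :
    ¬ MaxMatchable A i i := by
  rintro ⟨M, -, c, hc, -⟩
  exact no_chain_self hc

lemma mu_eq_zero {A : Matrix (Fin n) (Fin n) ℝ} {i j : Fin n}
    (h : ¬ MaxMatchable A i j) : mu A i j = 0 := by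
  simp [mu, beta, h]

lemma mu_self (A : Matrix (Fin n) (Fin n) ℝ) (i : Fin n) : mu A i i = 0 :=
  mu_eq_zero (not_maxMatchable_self A i)

lemma mem_maxMatchings {A : Matrix (Fin n) (Fin n) ℝ} {M : Finset (Sym2 (Fin n))} :
    M ∈ maxMatchings A ↔ IsMaxMatching (DA A) M := by
  simp [maxMatchings]

lemma isMatching_empty (G : Fin n → Fin n → Prop) : IsMatching G (∅ : Finset (Sym2 (Fin n))) :=
  ⟨by simp, by simp⟩

lemma exists_maxMatching (A : Matrix (Fin n) (Fin n) ℝ) :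
    ∃ M, IsMaxMatching (DA A) M := by
  classical
  obtain ⟨M, hM, hmax⟩ := Finset.exists_max_image
    (Finset.univ.filter (fun M => IsMatching (DA A) M)) Finset.card
    ⟨∅, by simp [isMatching_empty]⟩
  refine ⟨M, (Finset.mem_filter.mp hM).2, fun M' hM' => hmax M' ?_⟩
  simp [hM']

end Basics
section Struct
variable {n : ℕ}

open scoped Classical in
/-- The chosen neighbour of a vertex (the centre of a pendant vertex). -/
noncomputable def cOf (A : Matrix (Fin n) (Fin n) ℝ) (p : Fin n) : Fin n :=
  if h : ∃ c, Adjd (DA A) p c then h.choose else p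

open scoped Classical in
/-- The non-pendant (core) vertices. -/
noncomputable def CoresF (A : Matrix (Fin n) (Fin n) ℝ) : Finset (Fin n) :=
  Finset.univ.filter (fun v => ¬ Pendant (DA A) v)

open scoped Classical in
/-- The pendant neighbours of a vertex. -/
noncomputable def PnbrF (A : Matrix (Fin n) (Fin n) ℝ) (c : Fin n) : Finset (Fin n) :=
  Finset.univ.filter (fun p => Pendant (DA A) p ∧ Adjd (DA A) c p)

/-- The local weight of a core vertex. -/
noncomputable def wgt (A : Matrix (Fin n) (Fin n) ℝ) (c : Fin n) : ℝ :=
  ∑ p ∈ PnbrF A c, A c p * A p c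

variable {A : Matrix (Fin n) (Fin n) ℝ}

lemma mem_CoresF {c : Fin n} : c ∈ CoresF A ↔ ¬ Pendant (DA A) c := by
  simp [CoresF]

lemma mem_PnbrF {c p : Fin n} : p ∈ PnbrF A c ↔ Pendant (DA A) p ∧ Adjd (DA A) c p := by
  simp [PnbrF]

lemma pendant_unique {p x y : Fin n} (hp : Pendant (DA A) p)
    (hx : Adjd (DA A) p x) (hy : Adjd (DA A) p y) : x = y := by
  obtain ⟨z, -, hz⟩ := hp
  rw [hz x hx, hz y hy]

lemma cOf_adj {p : Fin n} (hp : Pendant (DA A) p) : Adjd (DA A) p (cOf A p) := by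
  obtain ⟨z, hz, -⟩ := hp
  rw [cOf, dif_pos ⟨z, hz⟩]
  exact (⟨z, hz⟩ : ∃ c, Adjd (DA A) p c).choose_spec

lemma cOf_eq {p x : Fin n} (hp : Pendant (DA A) p) (hx : Adjd (DA A) p x) :
    cOf A p = x :=
  pendant_unique hp (cOf_adj hp) hx

section SSD
variable (hD : InClassD (DA A))
include hD

lemma DA_symm {i j : Fin n} (h : DA A i j) : DA A j i := hD.1.2 i j h

lemma diag_zero (i : Fin n) : A i i = 0 := by
  have := hD.1.1 i
  simpa [DA] using this

lemma adjd_of_DA {i j : Fin n} (h : DA A i j) (hne : i ≠ j) : Adjd (DA A) i j :=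
  ⟨hne, h, DA_symm hD h⟩

lemma A_eq_zero_of_not_adjd {i j : Fin n} (h : ¬ Adjd (DA A) i j) : A i j = 0 := by
  by_cases hij : i = j
  · exact hij ▸ diag_zero hD i
  · by_contra hA
    exact h (adjd_of_DA hD hA hij)

omit hD in
lemma A_ne_zero_of_adjd {i j : Fin n} (h : Adjd (DA A) i j) : A i j ≠ 0 := h.2.1

/-- Every vertex has a neighbour. -/
lemma exists_adjd (i : Fin n) : ∃ j, Adjd (DA A) i j := by
  by_cases hp : Pendant (DA A) i
  · obtain ⟨j, hj, -⟩ := hp; exact ⟨j, hj⟩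
  · obtain ⟨j, hj, -⟩ := hD.2 i hp; exact ⟨j, hj⟩

lemma core_exists_pendant {c : Fin n} (hc : ¬ Pendant (DA A) c) :
    ∃ p, Pendant (DA A) p ∧ Adjd (DA A) c p := by
  obtain ⟨p, hp1, hp2⟩ := hD.2 c hc; exact ⟨p, hp2, hp1⟩

variable (hSC : StronglyConnected (DA A)) (hn : 3 ≤ n)
include hSC hn

/-- For `n ≥ 3`, two pendant vertices are never adjacent. -/
lemma no_pendant_pendant {p q : Fin n} (hp : Pendant (DA A) p) (hq : Pendant (DA A) q)
    (hadj : Adjd (DA A) p q) : False := by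
  have key : ∀ x, Relation.ReflTransGen (DA A) p x → x = p ∨ x = q := by
    intro x hx
    induction hx with
    | refl => exact Or.inl rfl
    | @tail b c hb hbc ih =>
      rcases ih with rfl | rfl
      · right
        have hbc' : Adjd (DA A) b c := adjd_of_DA hD hbc (by rintro rfl; exact hD.1.1 _ hbc)
        exact pendant_unique hp hbc' hadj ▸ rfl
      · left
        have hbc' : Adjd (DA A) b c := adjd_of_DA hD hbc (by rintro rfl; exact hD.1.1 _ hbc)
        exact pendant_unique hq hbc' hadj.symm'
  have : ∃ r : Fin n, r ≠ p ∧ r ≠ q := by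
    by_contra hcon
    push_neg at hcon
    have hsub : (Finset.univ : Finset (Fin n)) ⊆ {p, q} := by
      intro r _
      rcases Classical.em (r = p) with rfl | hr
      · simp
      · simp [hcon r hr]
    have := Finset.card_le_card hsub
    simp only [Finset.card_univ, Fintype.card_fin] at this
    have h2 : ({p, q} : Finset (Fin n)).card ≤ 2 := Finset.card_insert_le _ _ |>.trans (by simp)
    omega
  obtain ⟨r, hrp, hrq⟩ := this
  rcases key r (hSC p r) with rfl | rfl
  · exact hrp rfl
  · exact hrq rfl

lemma core_of_pendant_adj {p x : Fin n} (hp : Pendant (DA A) p) (hx : Adjd (DA A) p x) :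
    ¬ Pendant (DA A) x := fun hxp => no_pendant_pendant hD hSC hn hp hxp hx

lemma cOf_core {p : Fin n} (hp : Pendant (DA A) p) : cOf A p ∈ CoresF A :=
  mem_CoresF.mpr (core_of_pendant_adj hD hSC hn hp (cOf_adj hp))

omit hD hSC hn in
lemma cOf_eq_of_mem_PnbrF {c k : Fin n} (hk : k ∈ PnbrF A c) : cOf A k = c := by
  obtain ⟨hkp, hadj⟩ := mem_PnbrF.mp hk
  exact cOf_eq hkp hadj.symm'

lemma edge_not_both_pendant {i j : Fin n} (hadj : Adjd (DA A) i j) :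
    ¬ Pendant (DA A) i ∨ ¬ Pendant (DA A) j := by
  by_cases hi : Pendant (DA A) i
  · exact Or.inr (core_of_pendant_adj hD hSC hn hi hadj)
  · exact Or.inl hi

end SSD
end Struct
section Matchings
variable {n : ℕ}

open scoped Classical in
/-- A chosen non-pendant endpoint of an edge. -/
noncomputable def coreOf (A : Matrix (Fin n) (Fin n) ℝ) (e : Sym2 (Fin n)) : Fin n :=
  if h : ∃ v, v ∈ e ∧ ¬ Pendant (DA A) v then h.choose else (Quot.out e).1

open scoped Classical in
/-- The matching determined by a choice of pendant neighbours for the cores. -/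
noncomputable def Fam (A : Matrix (Fin n) (Fin n) ℝ) (f : Fin n → Fin n) :
    Finset (Sym2 (Fin n)) :=
  (CoresF A).image (fun c => s(c, f c))

/-- A good choice function. -/
def GoodF (A : Matrix (Fin n) (Fin n) ℝ) (f : Fin n → Fin n) : Prop :=
  ∀ c ∈ CoresF A, f c ∈ PnbrF A c

variable {A : Matrix (Fin n) (Fin n) ℝ}

lemma cycProd_mk (a b : Fin n) : cycProd A s(a, b) = A a b * A b a := rfl

lemma matched_unique {M : Finset (Sym2 (Fin n))} (hM : IsMatching (DA A) M)
    {c p q : Fin n} (hp : s(c, p) ∈ M) (hq : s(c, q) ∈ M) : p = q := by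
  by_cases he : s(c, p) = s(c, q)
  · rcases Sym2.eq_iff.mp he with ⟨-, h⟩ | ⟨h1, h2⟩
    · exact h
    · exact h2.trans h1
  · exact absurd (Sym2.mem_mk_left c q) (hM.2 _ hp _ hq he c (Sym2.mem_mk_left c p))

section WithHyp
variable (hD : InClassD (DA A)) (hSC : StronglyConnected (DA A)) (hn : 3 ≤ n)
include hD hSC hn

lemma coreOf_spec {e : Sym2 (Fin n)} (he : IsEdge (DA A) e) :
    coreOf A e ∈ e ∧ coreOf A e ∈ CoresF A := by
  obtain ⟨i, j, rfl, hadj⟩ := he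
  have hex : ∃ v, v ∈ s(i, j) ∧ ¬ Pendant (DA A) v := by
    rcases edge_not_both_pendant hD hSC hn hadj with h | h
    · exact ⟨i, Sym2.mem_mk_left i j, h⟩
    · exact ⟨j, Sym2.mem_mk_right i j, h⟩
  rw [coreOf, dif_pos hex]
  exact ⟨hex.choose_spec.1, mem_CoresF.mpr hex.choose_spec.2⟩

lemma matching_card_le {M : Finset (Sym2 (Fin n))} (hM : IsMatching (DA A) M) :
    M.card ≤ (CoresF A).card := by
  refine Finset.card_le_card_of_injOn (coreOf A) (fun e he => (coreOf_spec hD hSC hn (hM.1 e he)).2) ?_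
  intro e he f hf hef
  by_contra hne
  have h1 := (coreOf_spec hD hSC hn (hM.1 e he)).1
  have h2 := (coreOf_spec hD hSC hn (hM.1 f hf)).1
  exact hM.2 e he f hf hne (coreOf A e) h1 (hef ▸ h2)

omit hSC hn in
lemma fam_injOn {f : Fin n → Fin n} (hf : GoodF A f) :
    Set.InjOn (fun c => s(c, f c)) (CoresF A) := by
  intro c hc c' hc' heq
  rcases Sym2.eq_iff.mp heq with ⟨h, -⟩ | ⟨h1, -⟩
  · exact h
  · exact absurd (mem_PnbrF.mp (hf c' hc')).1 (h1 ▸ mem_CoresF.mp hc)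

omit hSC hn in
lemma mem_fam {f : Fin n → Fin n} (hf : GoodF A f) {c : Fin n} (hc : c ∈ CoresF A) :
    s(c, f c) ∈ Fam A f := Finset.mem_image_of_mem _ hc

omit hD hSC hn in
lemma fam_struct {f : Fin n → Fin n} (hf : GoodF A f) {e : Sym2 (Fin n)} (he : e ∈ Fam A f) :
    ∃ c ∈ CoresF A, e = s(c, f c) := by
  obtain ⟨c, hc, rfl⟩ := Finset.mem_image.mp he
  exact ⟨c, hc, rfl⟩

omit hSC hn in
lemma fam_matching {f : Fin n → Fin n} (hf : GoodF A f) :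
    IsMatching (DA A) (Fam A f) := by
  constructor
  · intro e he
    obtain ⟨c, hc, rfl⟩ := fam_struct hf he
    obtain ⟨hp, hadj⟩ := mem_PnbrF.mp (hf c hc)
    exact ⟨c, f c, rfl, hadj⟩
  · intro e he e' he' hne v hv hv'
    obtain ⟨c, hc, rfl⟩ := fam_struct hf he
    obtain ⟨c', hc', rfl⟩ := fam_struct hf he'
    have hcc' : c ≠ c' := fun h => hne (h ▸ rfl)
    obtain ⟨hpc, hadjc⟩ := mem_PnbrF.mp (hf c hc)
    obtain ⟨hpc', hadjc'⟩ := mem_PnbrF.mp (hf c' hc')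
    rcases Sym2.mem_iff.mp hv with rfl | rfl <;> rcases Sym2.mem_iff.mp hv' with h | h
    · exact hcc' h
    · exact (h ▸ mem_CoresF.mp hc) hpc'
    · exact (h ▸ mem_CoresF.mp hc') hpc
    · exact hcc' (pendant_unique hpc hadjc.symm' (h ▸ hadjc'.symm'))

omit hSC hn in
lemma fam_card {f : Fin n → Fin n} (hf : GoodF A f) :
    (Fam A f).card = (CoresF A).card := Finset.card_image_of_injOn (fam_injOn hD hf)

open scoped Classical in
/-- A default good choice function. -/
noncomputable def pickF (A : Matrix (Fin n) (Fin n) ℝ) : Fin n → Fin n := fun c =>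
  if h : ∃ p, Pendant (DA A) p ∧ Adjd (DA A) c p then h.choose else c

omit hSC hn in
lemma pickF_good : GoodF A (pickF A) := by
  intro c hc
  have hex := core_exists_pendant hD (mem_CoresF.mp hc)
  rw [pickF, dif_pos hex]
  exact mem_PnbrF.mpr ⟨hex.choose_spec.1, hex.choose_spec.2⟩

lemma isMaxMatching_iff {M : Finset (Sym2 (Fin n))} :
    IsMaxMatching (DA A) M ↔ IsMatching (DA A) M ∧ M.card = (CoresF A).card := by
  constructor
  · rintro ⟨hM, hmax⟩
    refine ⟨hM, le_antisymm (matching_card_le hD hSC hn hM) ?_⟩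
    rw [← fam_card hD (pickF_good hD)]
    exact hmax _ (fam_matching hD (pickF_good hD))
  · rintro ⟨hM, hcard⟩
    exact ⟨hM, fun M' hM' => (matching_card_le hD hSC hn hM').trans hcard.ge⟩

omit hSC hn in
lemma fam_max (hmax : ∀ {M : Finset (Sym2 (Fin n))},
      IsMaxMatching (DA A) M ↔ IsMatching (DA A) M ∧ M.card = (CoresF A).card)
    {f : Fin n → Fin n} (hf : GoodF A f) : IsMaxMatching (DA A) (Fam A f) :=
  hmax.mpr ⟨fam_matching hD hf, fam_card hD hf⟩

lemma max_edge_struct {M : Finset (Sym2 (Fin n))} (hM : IsMaxMatching (DA A) M)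
    {e : Sym2 (Fin n)} (he : e ∈ M) :
    ∃ c p, e = s(c, p) ∧ c ∈ CoresF A ∧ p ∈ PnbrF A c := by
  have hcard : (CoresF A).card ≤ M.card :=
    ((isMaxMatching_iff hD hSC hn).mp hM).2.ge
  have hsurj := Finset.surj_on_of_inj_on_of_card_le (s := M) (t := CoresF A)
    (fun e _ => coreOf A e)
    (fun e he => (coreOf_spec hD hSC hn (hM.1.1 e he)).2)
    (fun e f he hf heq => by
      by_contra hne
      have h1 := (coreOf_spec hD hSC hn (hM.1.1 e he)).1
      have h2 := (coreOf_spec hD hSC hn (hM.1.1 f hf)).1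
      exact hM.1.2 e he f hf hne (coreOf A e) h1 (heq ▸ h2)) hcard
  have hxe := coreOf_spec hD hSC hn (hM.1.1 e he)
  obtain ⟨y, hey⟩ := Sym2.mem_iff_exists.mp hxe.1
  have hxy : coreOf A e ≠ y := by
    intro hxyeq
    obtain ⟨i, j, hij, hadj⟩ := hM.1.1 e he
    rw [hey, hxyeq] at hij
    rcases Sym2.eq_iff.mp hij with ⟨h1, h2⟩ | ⟨h1, h2⟩
    · exact hadj.1 (h1.symm.trans h2)
    · exact hadj.1 (h2.symm.trans h1)
  have hadjxy : Adjd (DA A) (coreOf A e) y := by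
    obtain ⟨i, j, hij, hadj⟩ := hM.1.1 e he
    rw [hey] at hij
    rcases Sym2.eq_iff.mp hij with ⟨h1, h2⟩ | ⟨h1, h2⟩
    · rw [h1, h2]; exact hadj
    · rw [h1, h2]; exact hadj.symm'
  have hyp : Pendant (DA A) y := by
    by_contra hyc
    obtain ⟨e', he', heq'⟩ := hsurj y (mem_CoresF.mpr hyc)
    have hy' : y ∈ e' := (heq' ▸ (coreOf_spec hD hSC hn (hM.1.1 e' he')).1)
    have hee : e' = e := by
      by_contra hne
      exact hM.1.2 e' he' _ he hne y hy' (hey ▸ Sym2.mem_mk_right _ y)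
    rw [hee] at heq'
    exact hxy heq'.symm
  exact ⟨coreOf A e, y, hey, hxe.2, mem_PnbrF.mpr ⟨hyp, hadjxy⟩⟩

lemma core_matched {M : Finset (Sym2 (Fin n))} (hM : IsMaxMatching (DA A) M)
    {c : Fin n} (hc : c ∈ CoresF A) : ∃ p, p ∈ PnbrF A c ∧ s(c, p) ∈ M := by
  have hcard : (CoresF A).card ≤ M.card := ((isMaxMatching_iff hD hSC hn).mp hM).2.ge
  have hsurj := Finset.surj_on_of_inj_on_of_card_le (s := M) (t := CoresF A)
    (fun e _ => coreOf A e)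
    (fun e he => (coreOf_spec hD hSC hn (hM.1.1 e he)).2)
    (fun e f he hf heq => by
      by_contra hne
      have h1 := (coreOf_spec hD hSC hn (hM.1.1 e he)).1
      have h2 := (coreOf_spec hD hSC hn (hM.1.1 f hf)).1
      exact hM.1.2 e he f hf hne (coreOf A e) h1 (heq ▸ h2)) hcard
  obtain ⟨e, he, heq⟩ := hsurj c hc
  obtain ⟨c', p, rfl, hc', hp⟩ := max_edge_struct hD hSC hn hM he
  have hce : c ∈ s(c', p) := heq ▸ (coreOf_spec hD hSC hn (hM.1.1 _ he)).1
  rcases Sym2.mem_iff.mp hce with rfl | rfl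
  · exact ⟨p, hp, he⟩
  · exact absurd (mem_PnbrF.mp hp).1 (mem_CoresF.mp hc)

end WithHyp
end Matchings
section Sums
variable {n : ℕ}

open scoped Classical in
/-- The choice function associated with a maximum matching. -/
noncomputable def fOf (A : Matrix (Fin n) (Fin n) ℝ) (M : Finset (Sym2 (Fin n))) :
    Fin n → Fin n := fun c =>
  if h : ∃ p, p ∈ PnbrF A c ∧ s(c, p) ∈ M then h.choose else c

open scoped Classical in
/-- Choice functions on a set of cores. -/
noncomputable def Choices (A : Matrix (Fin n) (Fin n) ℝ) (t : Finset (Fin n)) :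
    Finset (Fin n → Fin n) :=
  Finset.univ.filter (fun f => (∀ c ∈ t, f c ∈ PnbrF A c) ∧ ∀ c ∉ t, f c = c)

variable {A : Matrix (Fin n) (Fin n) ℝ}

lemma mem_Choices {t : Finset (Fin n)} {f : Fin n → Fin n} :
    f ∈ Choices A t ↔ (∀ c ∈ t, f c ∈ PnbrF A c) ∧ ∀ c ∉ t, f c = c := by
  simp [Choices]

lemma fOf_eq {M : Finset (Sym2 (Fin n))} (hM : IsMatching (DA A) M) {c p : Fin n}
    (hp : p ∈ PnbrF A c) (hmem : s(c, p) ∈ M) : fOf A M c = p := by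
  have hex : ∃ q, q ∈ PnbrF A c ∧ s(c, q) ∈ M := ⟨p, hp, hmem⟩
  rw [fOf, dif_pos hex]
  exact matched_unique hM hex.choose_spec.2 hmem

section WithHyp
variable (hD : InClassD (DA A)) (hSC : StronglyConnected (DA A)) (hn : 3 ≤ n)
include hD hSC hn

lemma fOf_spec {M : Finset (Sym2 (Fin n))} (hM : IsMaxMatching (DA A) M) {c : Fin n}
    (hc : c ∈ CoresF A) : fOf A M c ∈ PnbrF A c ∧ s(c, fOf A M c) ∈ M := by
  obtain ⟨p, hp, hmem⟩ := core_matched hD hSC hn hM hc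
  rw [fOf_eq hM.1 hp hmem]
  exact ⟨hp, hmem⟩

lemma fOf_off {M : Finset (Sym2 (Fin n))} {c : Fin n}
    (hc : c ∉ CoresF A) : fOf A M c = c := by
  rw [fOf, dif_neg]
  rintro ⟨p, hp, -⟩
  obtain ⟨hpend, hadj⟩ := mem_PnbrF.mp hp
  exact no_pendant_pendant hD hSC hn (not_not.mp (fun h => hc (mem_CoresF.mpr h))) hpend hadj

lemma fOf_mem_Choices {M : Finset (Sym2 (Fin n))} (hM : IsMaxMatching (DA A) M) :
    fOf A M ∈ Choices A (CoresF A) :=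
  mem_Choices.mpr ⟨fun c hc => (fOf_spec hD hSC hn hM hc).1, fun c hc => fOf_off hD hSC hn hc⟩

lemma fam_fOf {M : Finset (Sym2 (Fin n))} (hM : IsMaxMatching (DA A) M) :
    Fam A (fOf A M) = M := by
  apply Finset.Subset.antisymm
  · intro e he
    obtain ⟨c, hc, rfl⟩ := Finset.mem_image.mp he
    exact (fOf_spec hD hSC hn hM hc).2
  · intro e he
    obtain ⟨c, p, rfl, hc, hp⟩ := max_edge_struct hD hSC hn hM he
    have : fOf A M c = p := fOf_eq hM.1 hp he
    exact Finset.mem_image.mpr ⟨c, hc, by rw [this]⟩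

lemma fOf_fam {f : Fin n → Fin n} (hf : f ∈ Choices A (CoresF A)) :
    fOf A (Fam A f) = f := by
  obtain ⟨hgood, hoff⟩ := mem_Choices.mp hf
  funext c
  by_cases hc : c ∈ CoresF A
  · exact fOf_eq (fam_matching hD hgood) (hgood c hc) (mem_fam hD hgood hc)
  · rw [fOf_off hD hSC hn hc, hoff c hc]

lemma fam_mem_max {f : Fin n → Fin n} (hf : f ∈ Choices A (CoresF A)) :
    IsMaxMatching (DA A) (Fam A f) :=
  (isMaxMatching_iff hD hSC hn).mpr
    ⟨fam_matching hD (mem_Choices.mp hf).1, fam_card hD (mem_Choices.mp hf).1⟩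

/-- Transfer of sums over constrained maximum matchings to sums over choice functions. -/
lemma sum_max_filter_eq (P : Finset (Sym2 (Fin n)) → Prop) [DecidablePred P]
    (Q : (Fin n → Fin n) → Prop) [DecidablePred Q]
    (hPQ : ∀ f ∈ Choices A (CoresF A), (P (Fam A f) ↔ Q f)) (g : Finset (Sym2 (Fin n)) → ℝ) :
    ∑ M ∈ (maxMatchings A).filter P, g M
      = ∑ f ∈ (Choices A (CoresF A)).filter Q, g (Fam A f) := by
  refine Finset.sum_nbij' (fun M => fOf A M) (fun f => Fam A f) ?_ ?_ ?_ ?_ ?_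
  · intro M hM
    obtain ⟨hM1, hM2⟩ := Finset.mem_filter.mp hM
    have hmax := mem_maxMatchings.mp hM1
    refine Finset.mem_filter.mpr ⟨fOf_mem_Choices hD hSC hn hmax, ?_⟩
    rw [← hPQ _ (fOf_mem_Choices hD hSC hn hmax), fam_fOf hD hSC hn hmax]
    exact hM2
  · intro f hf
    obtain ⟨hf1, hf2⟩ := Finset.mem_filter.mp hf
    exact Finset.mem_filter.mpr ⟨mem_maxMatchings.mpr (fam_mem_max hD hSC hn hf1),
      (hPQ _ hf1).mpr hf2⟩
  · intro M hM
    exact fam_fOf hD hSC hn (mem_maxMatchings.mp (Finset.mem_filter.mp hM).1)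
  · intro f hf
    exact fOf_fam hD hSC hn (Finset.mem_filter.mp hf).1
  · intro M hM
    rw [fam_fOf hD hSC hn (mem_maxMatchings.mp (Finset.mem_filter.mp hM).1)]

end WithHyp

open scoped Classical in
/-- Expansion of a constrained sum of products over choice functions. -/
lemma choices_sum_prod (u : Fin n → Fin n → ℝ) :
    ∀ t : Finset (Fin n), ∑ f ∈ Choices A t, ∏ c ∈ t, u c (f c)
      = ∏ c ∈ t, ∑ p ∈ PnbrF A c, u c p := by
  classical
  intro t
  induction t using Finset.induction_on with
  | empty =>
    have : Choices A (∅ : Finset (Fin n)) = {fun c => c} := by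
      ext f
      simp only [mem_Choices, Finset.notMem_empty, Finset.mem_singleton]
      constructor
      · rintro ⟨-, h⟩; funext c; exact h c (by simp)
      · rintro rfl; exact ⟨by simp, fun c _ => rfl⟩
    simp [this]
  | @insert a t ha ih =>
    have key : ∑ f ∈ Choices A (insert a t), ∏ c ∈ insert a t, u c (f c)
        = ∑ pg ∈ (PnbrF A a) ×ˢ (Choices A t), u a pg.1 * ∏ c ∈ t, u c (pg.2 c) := by
      refine Finset.sum_nbij' (fun f => (f a, Function.update f a a))
        (fun pg => Function.update pg.2 a pg.1) ?_ ?_ ?_ ?_ ?_ <;> dsimp -failIfUnchanged only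
      · intro f hf
        obtain ⟨hgood, hoff⟩ := mem_Choices.mp hf
        refine Finset.mem_product.mpr ⟨hgood a (Finset.mem_insert_self a t), ?_⟩
        refine mem_Choices.mpr ⟨fun c hc => ?_, fun c hc => ?_⟩
        · show Function.update f a a c ∈ PnbrF A c
          have hca : c ≠ a := fun h => ha (h ▸ hc)
          rw [Function.update_of_ne hca]
          exact hgood c (Finset.mem_insert_of_mem hc)
        · show Function.update f a a c = c
          by_cases hca : c = a
          · subst hca; simp
          · rw [Function.update_of_ne hca]
            exact hoff c (by simp [hca, hc])
      · intro pg hpg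
        obtain ⟨hp, hg⟩ := Finset.mem_product.mp hpg
        obtain ⟨hgood, hoff⟩ := mem_Choices.mp hg
        refine mem_Choices.mpr ⟨fun c hc => ?_, fun c hc => ?_⟩
        · rcases Finset.mem_insert.mp hc with rfl | hct
          · simpa using hp
          · have hca : c ≠ a := fun h => ha (h ▸ hct)
            rw [Function.update_of_ne hca]
            exact hgood c hct
        · have hca : c ≠ a := fun h => hc (h ▸ Finset.mem_insert_self a t)
          rw [Function.update_of_ne hca]
          exact hoff c (fun h => hc (Finset.mem_insert_of_mem h))
      · intro f hf
        obtain ⟨hgood, hoff⟩ := mem_Choices.mp hf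
        funext c
        by_cases hca : c = a
        · subst hca; simp
        · simp [Function.update_of_ne hca]
      · intro pg hpg
        obtain ⟨hp, hg⟩ := Finset.mem_product.mp hpg
        obtain ⟨hgood, hoff⟩ := mem_Choices.mp hg
        have h2 : Function.update (Function.update pg.2 a pg.1) a a = pg.2 := by
          funext c
          by_cases hca : c = a
          · subst hca
            simp only [Function.update_self]
            exact (hoff _ ha).symm
          · simp [Function.update_of_ne hca]
        simp [h2]
      · intro f hf
        obtain ⟨hgood, hoff⟩ := mem_Choices.mp hf
        rw [Finset.prod_insert ha]
        congr 1
        refine Finset.prod_congr rfl (fun c hc => ?_)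
        have hca : c ≠ a := fun h => ha (h ▸ hc)
        rw [Function.update_of_ne hca]
    rw [key, Finset.sum_product, Finset.prod_insert ha, ← ih, Finset.sum_mul_sum]

/-- Fixing the value of a choice function at one core. -/
lemma choices_fix (t : Finset (Fin n)) {a p₀ : Fin n} (ha : a ∈ t) (hp : p₀ ∈ PnbrF A a)
    (R : (Fin n → Fin n) → Prop) [DecidablePred R] (hR : ∀ f g, (∀ c, c ≠ a → f c = g c) → (R f ↔ R g))
    (Φ : (Fin n → Fin n) → ℝ) (hΦ : ∀ f g, (∀ c, c ≠ a → f c = g c) → Φ f = Φ g) :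
    ∑ f ∈ (Choices A t).filter (fun f => f a = p₀ ∧ R f), Φ f
      = ∑ g ∈ (Choices A (t.erase a)).filter R, Φ g := by
  refine Finset.sum_nbij' (fun f => Function.update f a a)
    (fun g => Function.update g a p₀) ?_ ?_ ?_ ?_ ?_ <;> dsimp -failIfUnchanged only
  · intro f hf
    have hf1 := (Finset.mem_filter.mp hf).1
    have hfa := (Finset.mem_filter.mp hf).2.1
    have hfR := (Finset.mem_filter.mp hf).2.2
    obtain ⟨hgood, hoff⟩ := mem_Choices.mp hf1
    refine Finset.mem_filter.mpr ⟨mem_Choices.mpr ⟨fun c hc => ?_, fun c hc => ?_⟩, ?_⟩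
    · have hca : c ≠ a := (Finset.mem_erase.mp hc).1
      rw [Function.update_of_ne hca]
      exact hgood c (Finset.mem_erase.mp hc).2
    · by_cases hca : c = a
      · subst hca; simp
      · rw [Function.update_of_ne hca]
        exact hoff c (fun h => hc (Finset.mem_erase.mpr ⟨hca, h⟩))
    · exact (hR _ f (fun c hca => Function.update_of_ne hca _ _)).mpr hfR
  · intro g hg
    obtain ⟨hg1, hgR⟩ := Finset.mem_filter.mp hg
    obtain ⟨hgood, hoff⟩ := mem_Choices.mp hg1
    refine Finset.mem_filter.mpr ⟨mem_Choices.mpr ⟨fun c hc => ?_, fun c hc => ?_⟩, ?_, ?_⟩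
    · by_cases hca : c = a
      · subst hca; simpa using hp
      · rw [Function.update_of_ne hca]
        exact hgood c (Finset.mem_erase.mpr ⟨hca, hc⟩)
    · have hca : c ≠ a := fun h => hc (h ▸ ha)
      rw [Function.update_of_ne hca]
      exact hoff c (fun h => hc (Finset.mem_erase.mp h).2)
    · simp
    · exact (hR _ g (fun c hca => Function.update_of_ne hca _ _)).mpr hgR
  · intro f hf
    have hfa := (Finset.mem_filter.mp hf).2.1
    funext c
    by_cases hca : c = a
    · subst hca; simp [hfa]
    · simp [Function.update_of_ne hca]
  · intro g hg
    obtain ⟨hg1, -⟩ := Finset.mem_filter.mp hg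
    obtain ⟨-, hoff⟩ := mem_Choices.mp hg1
    funext c
    by_cases hca : c = a
    · subst hca
      simp only [Function.update_self]
      exact (hoff _ (fun h => (Finset.mem_erase.mp h).1 rfl)).symm
    · simp [Function.update_of_ne hca]
  · intro f hf
    exact hΦ f _ (fun c hca => (Function.update_of_ne hca _ _).symm)

end Sums
section Chains
variable {n : ℕ}

lemma length_eq_four_list {α : Type*} {l : List α} (h : l.length = 4) :
    ∃ a b c d, l = [a, b, c, d] := by
  rcases l with _ | ⟨a, _ | ⟨b, _ | ⟨c', _ | ⟨d, _ | ⟨x, t⟩⟩⟩⟩⟩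
  · simp at h
  · simp at h
  · simp at h
  · simp at h
  · exact ⟨a, b, c', d, rfl⟩
  · simp at h

lemma chainEdges_length (c : List (Fin n)) : (chainEdges c).length = c.length - 1 := by
  simp [chainEdges]

lemma chainEdges_get (c : List (Fin n)) (i : Fin n) (k : ℕ) (h : k < (chainEdges c).length) :
    (chainEdges c).get ⟨k, h⟩ = s(c.getD k i, c.getD (k + 1) i) := by
  have h' := h
  rw [chainEdges_length] at h'
  rw [List.getD_eq_getElem _ _ (by omega), List.getD_eq_getElem _ _ (by omega)]
  simp [chainEdges, List.get_eq_getElem, List.getElem_zipWith, List.getElem_tail]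

variable {A : Matrix (Fin n) (Fin n) ℝ}
variable (hD : InClassD (DA A)) (hSC : StronglyConnected (DA A)) (hn : 3 ≤ n)
include hD hSC hn

/-- Classification of alternating cycle chains for `n ≥ 3`. -/
lemma chain_classification {M : Finset (Sym2 (Fin n))} (hM : IsMaxMatching (DA A) M)
    {i j : Fin n} {c : List (Fin n)} (hc : IsCycleChainBtw (DA A) i j c)
    (halt : IsAltChain M c) :
    (c = [i, j] ∧ s(i, j) ∈ M) ∨
    (c = [i, cOf A i, cOf A j, j] ∧ Pendant (DA A) i ∧ Pendant (DA A) j ∧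
      Adjd (DA A) (cOf A i) (cOf A j) ∧ s(i, cOf A i) ∈ M ∧ s(cOf A j, j) ∈ M) := by
  obtain ⟨⟨hnd, hlen2, hch⟩, hhead, hlast⟩ := hc
  have hadj : ∀ (k), k + 1 < c.length → Adjd (DA A) (c.getD k i) (c.getD (k + 1) i) := by
    intro k h
    rw [List.getD_eq_getElem _ _ (by omega), List.getD_eq_getElem _ _ (by omega)]
    exact List.isChain_iff_getElem.mp hch k (by omega)
  have hinj : ∀ (k l), k < c.length → l < c.length → k ≠ l → c.getD k i ≠ c.getD l i := by
    intro k l hk hl hne heq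
    rw [List.getD_eq_getElem _ _ hk, List.getD_eq_getElem _ _ hl] at heq
    exact hne (List.Nodup.getElem_inj_iff hnd |>.mp heq)
  have hint : ∀ (k), 0 < k → k + 1 < c.length → ¬ Pendant (DA A) (c.getD k i) := by
    intro k h0 h1 hp
    have h1' := hadj k h1
    have h2' : Adjd (DA A) (c.getD k i) (c.getD (k - 1) i) := by
      have h3 := (hadj (k - 1) (by omega)).symm'
      rwa [show k - 1 + 1 = k from by omega] at h3
    exact hinj (k+1) (k-1) h1 (by omega) (by omega) (pendant_unique hp h1' h2')
  have hMedge : ∀ (k), k < c.length - 1 → Even k → s(c.getD k i, c.getD (k + 1) i) ∈ M := by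
    intro k h hk
    have h' : k < (chainEdges c).length := by rw [chainEdges_length]; omega
    have := (halt.2 k h').mpr hk
    rwa [chainEdges_get c i k h'] at this
  have hbd : ∀ (k), k < c.length - 1 → Even k → k = 0 ∨ k = c.length - 2 := by
    intro k h hk
    obtain ⟨co, p, heq, hco, hp⟩ := max_edge_struct hD hSC hn hM (hMedge k h hk)
    obtain ⟨hpend, -⟩ := mem_PnbrF.mp hp
    rcases Sym2.eq_iff.mp heq with ⟨-, h2⟩ | ⟨h1, -⟩
    · by_contra hcon
      push_neg at hcon
      exact hint (k+1) (by omega) (by omega) (h2 ▸ hpend)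
    · by_contra hcon
      push_neg at hcon
      exact hint k (by omega) (by omega) (h1 ▸ hpend)
  have hodd : Odd (c.length - 1) := by
    have := halt.1; rwa [chainEdges_length] at this
  have hL24 : c.length = 2 ∨ c.length = 4 := by
    by_contra hcon
    push_neg at hcon
    have hL6 : 6 ≤ c.length := by
      rcases hodd with ⟨m, hm⟩
      omega
    rcases hbd 2 (by omega) (by decide) with h | h <;> omega
  rcases hL24 with hL2 | hL4
  · left
    obtain ⟨a, b, hab⟩ := List.length_eq_two.mp hL2
    subst hab
    have ha : a = i := by simpa using hhead
    have hb : b = j := by simpa [List.getLast?] using hlast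
    subst ha; subst hb
    refine ⟨rfl, ?_⟩
    have := hMedge 0 (by omega) (by decide)
    simpa using this
  · right
    obtain ⟨a, b, d, e, rfl⟩ := length_eq_four_list hL4
    have ha : a = i := by simpa using hhead
    have he : e = j := by simpa [List.getLast?] using hlast
    subst ha; subst he
    have e0 : s(a, b) ∈ M := by simpa using hMedge 0 (by norm_num) (by decide)
    have e2 : s(d, e) ∈ M := by simpa using hMedge 2 (by norm_num) (by decide)
    have hbint : ¬ Pendant (DA A) b := by simpa using hint 1 (by norm_num) (by norm_num)
    have hdint : ¬ Pendant (DA A) d := by simpa using hint 2 (by norm_num) (by norm_num)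
    have hadj01 : Adjd (DA A) a b := by simpa using hadj 0 (by norm_num)
    have hadj12 : Adjd (DA A) b d := by simpa using hadj 1 (by norm_num)
    have hadj23 : Adjd (DA A) d e := by simpa using hadj 2 (by norm_num)
    have hpi : Pendant (DA A) a := by
      obtain ⟨co, p, heq, hco, hp⟩ := max_edge_struct hD hSC hn hM e0
      obtain ⟨hpend, -⟩ := mem_PnbrF.mp hp
      rcases Sym2.eq_iff.mp heq with ⟨-, h2⟩ | ⟨h1, -⟩
      · exact absurd (h2 ▸ hpend) hbint
      · exact h1 ▸ hpend
    have hpj : Pendant (DA A) e := by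
      obtain ⟨co, p, heq, hco, hp⟩ := max_edge_struct hD hSC hn hM e2
      obtain ⟨hpend, -⟩ := mem_PnbrF.mp hp
      rcases Sym2.eq_iff.mp heq with ⟨-, h2⟩ | ⟨h1, -⟩
      · exact h2 ▸ hpend
      · exact absurd (h1 ▸ hpend) hdint
    have hcb : cOf A a = b := cOf_eq hpi hadj01
    have hcd : cOf A e = d := cOf_eq hpj hadj23.symm'
    exact ⟨by rw [hcb, hcd], hpi, hpj, by rw [hcb, hcd]; exact hadj12,
      by rw [hcb]; exact e0, by rw [hcd]; exact e2⟩

end Chains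
section MuEval
variable {n : ℕ} {A : Matrix (Fin n) (Fin n) ℝ}

lemma isCycleChainBtw_pair {c p : Fin n} (hadj : Adjd (DA A) c p) :
    IsCycleChainBtw (DA A) c p [c, p] := by
  refine ⟨⟨by simp [hadj.1], by simp, by simp [List.Chain', hadj]⟩, by simp, by simp [List.getLast?]⟩

lemma chainEdges_pair (c p : Fin n) : chainEdges [c, p] = [s(c, p)] := rfl

lemma isAltChain_pair {M : Finset (Sym2 (Fin n))} {c p : Fin n} (hmem : s(c, p) ∈ M) :
    IsAltChain M [c, p] := by
  constructor
  · rw [chainEdges_pair]; exact ⟨0, by norm_num⟩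
  · intro k h
    have h' : k = 0 := by
      have hl := chainEdges_length ([c, p] : List (Fin n))
      simp at hl; omega
    subst h'
    exact iff_of_true hmem Even.zero

lemma chainEdges_quad (p cp cq q : Fin n) :
    chainEdges [p, cp, cq, q] = [s(p, cp), s(cp, cq), s(cq, q)] := rfl

lemma isAltChain_quad {M : Finset (Sym2 (Fin n))} {p cp cq q : Fin n}
    (h1 : s(p, cp) ∈ M) (h2 : s(cp, cq) ∉ M) (h3 : s(cq, q) ∈ M) :
    IsAltChain M [p, cp, cq, q] := by
  constructor
  · rw [chainEdges_quad]; exact ⟨1, by norm_num⟩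
  · intro k h
    have h' : k < 3 := by
      have hl := chainEdges_length ([p, cp, cq, q] : List (Fin n))
      simp at hl; omega
    interval_cases k
    · exact iff_of_true h1 (by decide)
    · exact iff_of_false h2 (by decide)
    · exact iff_of_true h3 (by decide)

lemma theChain_spec {i j : Fin n} (h : MaxMatchable A i j) :
    IsCycleChainBtw (DA A) i j (theChain A i j) ∧
      ∃ M ∈ MMset A i j, IsAltChain M (theChain A i j) := by
  classical
  obtain ⟨M, hM⟩ := h
  obtain ⟨hmax, c, hc, halt⟩ := hM
  have hex : ∃ c, IsCycleChainBtw (DA A) i j c ∧ ∃ M ∈ MMset A i j, IsAltChain M c :=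
    ⟨c, hc, M, ⟨hmax, c, hc, halt⟩, halt⟩
  rw [theChain, dif_pos hex]
  exact hex.choose_spec

section WithHyp
variable (hD : InClassD (DA A)) (hSC : StronglyConnected (DA A)) (hn : 3 ≤ n)
include hD hSC hn

lemma no_core_core_edge {M : Finset (Sym2 (Fin n))} (hM : IsMaxMatching (DA A) M)
    {c c' : Fin n} (hc : ¬ Pendant (DA A) c) (hc' : ¬ Pendant (DA A) c')
    (hmem : s(c, c') ∈ M) : False := by
  obtain ⟨co, p, heq, hco, hp⟩ := max_edge_struct hD hSC hn hM hmem
  obtain ⟨hpend, -⟩ := mem_PnbrF.mp hp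
  rcases Sym2.eq_iff.mp heq with ⟨-, h2⟩ | ⟨h1, -⟩
  · exact hc' (h2 ▸ hpend)
  · exact hc (h1 ▸ hpend)

lemma exists_max_with {c₀ p₀ : Fin n} (hc : c₀ ∈ CoresF A) (hp : p₀ ∈ PnbrF A c₀) :
    ∃ M, IsMaxMatching (DA A) M ∧ s(c₀, p₀) ∈ M := by
  classical
  set f := Function.update (pickF A) c₀ p₀ with hf
  have hgood : GoodF A f := by
    intro c hcc
    by_cases h : c = c₀
    · subst h; simp [hf, hp]
    · rw [hf, Function.update_of_ne h]
      exact pickF_good hD c hcc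
  refine ⟨Fam A f, fam_max hD (isMaxMatching_iff hD hSC hn) hgood, ?_⟩
  have : s(c₀, f c₀) ∈ Fam A f := mem_fam hD hgood hc
  simpa [hf] using this

lemma exists_max_with2 {c₀ p₀ c₁ p₁ : Fin n} (hc : c₀ ∈ CoresF A) (hp : p₀ ∈ PnbrF A c₀)
    (hc' : c₁ ∈ CoresF A) (hp' : p₁ ∈ PnbrF A c₁) (hne : c₀ ≠ c₁) :
    ∃ M, IsMaxMatching (DA A) M ∧ s(c₀, p₀) ∈ M ∧ s(c₁, p₁) ∈ M := by
  classical
  set f := Function.update (Function.update (pickF A) c₀ p₀) c₁ p₁ with hf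
  have hgood : GoodF A f := by
    intro c hcc
    by_cases h1 : c = c₁
    · subst h1; simp [hf, hp']
    · rw [hf, Function.update_of_ne h1]
      by_cases h0 : c = c₀
      · subst h0; simp [hp]
      · rw [Function.update_of_ne h0]
        exact pickF_good hD c hcc
  have hfc0 : f c₀ = p₀ := by rw [hf, Function.update_of_ne hne]; simp
  have hfc1 : f c₁ = p₁ := by simp [hf]
  refine ⟨Fam A f, fam_max hD (isMaxMatching_iff hD hSC hn) hgood, ?_, ?_⟩
  · have := mem_fam hD hgood hc; rwa [hfc0] at this
  · have := mem_fam hD hgood hc'; rwa [hfc1] at this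

lemma maxMatchable_core_pend {c₀ p₀ : Fin n} (hc : c₀ ∈ CoresF A) (hp : p₀ ∈ PnbrF A c₀) :
    MaxMatchable A c₀ p₀ := by
  obtain ⟨M, hM, hmem⟩ := exists_max_with hD hSC hn hc hp
  have hadj : Adjd (DA A) c₀ p₀ := (mem_PnbrF.mp hp).2
  exact ⟨M, hM, [c₀, p₀], isCycleChainBtw_pair hadj, isAltChain_pair hmem⟩

lemma maxMatchable_pend_core {c₀ p₀ : Fin n} (hc : c₀ ∈ CoresF A) (hp : p₀ ∈ PnbrF A c₀) :
    MaxMatchable A p₀ c₀ := by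
  obtain ⟨M, hM, hmem⟩ := exists_max_with hD hSC hn hc hp
  have hadj : Adjd (DA A) c₀ p₀ := (mem_PnbrF.mp hp).2
  exact ⟨M, hM, [p₀, c₀], isCycleChainBtw_pair hadj.symm',
    isAltChain_pair (Sym2.eq_swap ▸ hmem)⟩

lemma mmset_core_pend {c₀ p₀ : Fin n} (hc : c₀ ∈ CoresF A) (hp : p₀ ∈ PnbrF A c₀) :
    MMset A c₀ p₀ = {M | IsMaxMatching (DA A) M ∧ s(c₀, p₀) ∈ M} := by
  ext M
  constructor
  · rintro ⟨hmax, c, hcc, halt⟩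
    rcases chain_classification hD hSC hn hmax hcc halt with ⟨-, hmem⟩ | ⟨-, hpend, -⟩
    · exact ⟨hmax, hmem⟩
    · exact absurd hpend (mem_CoresF.mp hc)
  · rintro ⟨hmax, hmem⟩
    exact ⟨hmax, [c₀, p₀], isCycleChainBtw_pair (mem_PnbrF.mp hp).2, isAltChain_pair hmem⟩

lemma mmset_pend_core {c₀ p₀ : Fin n} (hc : c₀ ∈ CoresF A) (hp : p₀ ∈ PnbrF A c₀) :
    MMset A p₀ c₀ = {M | IsMaxMatching (DA A) M ∧ s(c₀, p₀) ∈ M} := by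
  ext M
  constructor
  · rintro ⟨hmax, c, hcc, halt⟩
    rcases chain_classification hD hSC hn hmax hcc halt with ⟨-, hmem⟩ | ⟨-, -, hpend, -⟩
    · exact ⟨hmax, Sym2.eq_swap ▸ hmem⟩
    · exact absurd hpend (mem_CoresF.mp hc)
  · rintro ⟨hmax, hmem⟩
    exact ⟨hmax, [p₀, c₀], isCycleChainBtw_pair (mem_PnbrF.mp hp).2.symm',
      isAltChain_pair (Sym2.eq_swap ▸ hmem)⟩

lemma theChain_core_pend {c₀ p₀ : Fin n} (hc : c₀ ∈ CoresF A) (hp : p₀ ∈ PnbrF A c₀) :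
    theChain A c₀ p₀ = [c₀, p₀] := by
  obtain ⟨hcc, M, hM, halt⟩ := theChain_spec (maxMatchable_core_pend hD hSC hn hc hp)
  rcases chain_classification hD hSC hn hM.1 hcc halt with ⟨h, -⟩ | ⟨-, hpend, -⟩
  · exact h
  · exact absurd hpend (mem_CoresF.mp hc)

lemma theChain_pend_core {c₀ p₀ : Fin n} (hc : c₀ ∈ CoresF A) (hp : p₀ ∈ PnbrF A c₀) :
    theChain A p₀ c₀ = [p₀, c₀] := by
  obtain ⟨hcc, M, hM, halt⟩ := theChain_spec (maxMatchable_pend_core hD hSC hn hc hp)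
  rcases chain_classification hD hSC hn hM.1 hcc halt with ⟨h, -⟩ | ⟨-, -, hpend, -⟩
  · exact h
  · exact absurd hpend (mem_CoresF.mp hc)

lemma isCycleChainBtw_quad {p q : Fin n} (hp : Pendant (DA A) p) (hq : Pendant (DA A) q)
    (hadj : Adjd (DA A) (cOf A p) (cOf A q)) :
    IsCycleChainBtw (DA A) p q [p, cOf A p, cOf A q, q] := by
  have hcp : cOf A p ∈ CoresF A := cOf_core hD hSC hn hp
  have hcq : cOf A q ∈ CoresF A := cOf_core hD hSC hn hq
  have hpq : p ≠ q := fun h => hadj.1 (h ▸ rfl)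
  refine ⟨⟨?_, by simp, ?_⟩, by simp, by simp [List.getLast?]⟩
  · have h1' : p ≠ cOf A p := (cOf_adj hp).1
    have h2' : p ≠ cOf A q := fun h => (mem_CoresF.mp hcq) (h ▸ hp)
    have h3' : q ≠ cOf A p := fun h => (mem_CoresF.mp hcp) (h ▸ hq)
    have h4' : q ≠ cOf A q := (cOf_adj hq).1
    simp [h1', h2', hpq, hadj.1, h3'.symm, h4'.symm]
  · simp [List.Chain', cOf_adj hp, hadj, (cOf_adj hq).symm']

lemma maxMatchable_pend_pend {p q : Fin n} (hp : Pendant (DA A) p) (hq : Pendant (DA A) q)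
    (hadj : Adjd (DA A) (cOf A p) (cOf A q)) : MaxMatchable A p q := by
  have hcp : cOf A p ∈ CoresF A := cOf_core hD hSC hn hp
  have hcq : cOf A q ∈ CoresF A := cOf_core hD hSC hn hq
  have hpmem : p ∈ PnbrF A (cOf A p) := mem_PnbrF.mpr ⟨hp, (cOf_adj hp).symm'⟩
  have hqmem : q ∈ PnbrF A (cOf A q) := mem_PnbrF.mpr ⟨hq, (cOf_adj hq).symm'⟩
  obtain ⟨M, hM, h1, h2⟩ := exists_max_with2 hD hSC hn hcp hpmem hcq hqmem hadj.1
  refine ⟨M, hM, [p, cOf A p, cOf A q, q], isCycleChainBtw_quad hD hSC hn hp hq hadj,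
    isAltChain_quad (Sym2.eq_swap ▸ h1) ?_ h2⟩
  intro hmem
  exact no_core_core_edge hD hSC hn hM (mem_CoresF.mp hcp) (mem_CoresF.mp hcq) hmem

lemma mmset_pend_pend {p q : Fin n} (hp : Pendant (DA A) p) (hq : Pendant (DA A) q)
    (hadj : Adjd (DA A) (cOf A p) (cOf A q)) :
    MMset A p q = {M | IsMaxMatching (DA A) M ∧ s(cOf A p, p) ∈ M ∧ s(cOf A q, q) ∈ M} := by
  have hcp : cOf A p ∈ CoresF A := cOf_core hD hSC hn hp
  have hcq : cOf A q ∈ CoresF A := cOf_core hD hSC hn hq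
  ext M
  constructor
  · rintro ⟨hmax, c, hcc, halt⟩
    rcases chain_classification hD hSC hn hmax hcc halt with ⟨-, hmem⟩ | ⟨-, -, -, -, h1, h2⟩
    · obtain ⟨co, pp, heq, hco, hpp⟩ := max_edge_struct hD hSC hn hmax hmem
      obtain ⟨hpend, -⟩ := mem_PnbrF.mp hpp
      exfalso
      rcases Sym2.eq_iff.mp heq with ⟨h1, -⟩ | ⟨-, h2⟩
      · exact (mem_CoresF.mp (h1 ▸ hco)) hp
      · exact (mem_CoresF.mp (h2 ▸ hco)) hq
    · exact ⟨hmax, Sym2.eq_swap ▸ h1, h2⟩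
  · rintro ⟨hmax, h1, h2⟩
    have hnotin : s(cOf A p, cOf A q) ∉ M := fun hmem =>
      no_core_core_edge hD hSC hn hmax (mem_CoresF.mp hcp) (mem_CoresF.mp hcq) hmem
    exact ⟨hmax, [p, cOf A p, cOf A q, q], isCycleChainBtw_quad hD hSC hn hp hq hadj,
      isAltChain_quad (Sym2.eq_swap ▸ h1) hnotin h2⟩

lemma theChain_pend_pend {p q : Fin n} (hp : Pendant (DA A) p) (hq : Pendant (DA A) q)
    (hadj : Adjd (DA A) (cOf A p) (cOf A q)) :
    theChain A p q = [p, cOf A p, cOf A q, q] := by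
  obtain ⟨hcc, M, hM, halt⟩ := theChain_spec (maxMatchable_pend_pend hD hSC hn hp hq hadj)
  rcases chain_classification hD hSC hn hM.1 hcc halt with ⟨-, hmem⟩ | ⟨h, -⟩
  · exfalso
    obtain ⟨co, pp, heq, hco, hpp⟩ := max_edge_struct hD hSC hn hM.1 hmem
    obtain ⟨hpend, -⟩ := mem_PnbrF.mp hpp
    rcases Sym2.eq_iff.mp heq with ⟨h1, -⟩ | ⟨-, h2⟩
    · exact (mem_CoresF.mp (h1 ▸ hco)) hp
    · exact (mem_CoresF.mp (h2 ▸ hco)) hq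
  · exact h
  
end WithHyp
end MuEval
section MuVal
variable {n : ℕ} {A : Matrix (Fin n) (Fin n) ℝ}

lemma pathProd_pair (a b : Fin n) : pathProd A [a, b] = A a b := by
  simp [pathProd]

lemma pathProd_quad (a b c d : Fin n) :
    pathProd A [a, b, c, d] = A a b * (A b c * A c d) := by
  simp [pathProd, mul_assoc]

section WithHyp
variable (hD : InClassD (DA A)) (hSC : StronglyConnected (DA A)) (hn : 3 ≤ n)
include hD hSC hn

omit hSC hn in
lemma mem_fam_iff {f : Fin n → Fin n} (hf : f ∈ Choices A (CoresF A)) {c₀ p₀ : Fin n}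
    (hc : c₀ ∈ CoresF A) (hp : Pendant (DA A) p₀) :
    s(c₀, p₀) ∈ Fam A f ↔ f c₀ = p₀ := by
  constructor
  · intro hmem
    obtain ⟨c, hcm, heq⟩ := Finset.mem_image.mp hmem
    rcases Sym2.eq_iff.mp heq with ⟨h1, h2⟩ | ⟨h1, h2⟩
    · rw [← h1]; exact h2
    · exact absurd (h1 ▸ hp) (mem_CoresF.mp hcm)
  · intro heq
    have := mem_fam hD (mem_Choices.mp hf).1 hc
    rwa [heq] at this

open scoped Classical in
omit hSC hn in
lemma fam_filter_eq {f : Fin n → Fin n} (hf : f ∈ Choices A (CoresF A))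
    (L : List (Sym2 (Fin n))) (E : Finset (Fin n))
    (hiff : ∀ c ∈ CoresF A, (s(c, f c) ∈ L ↔ c ∈ E)) :
    (Fam A f).filter (fun e => e ∉ L) = (CoresF A \ E).image (fun c => s(c, f c)) := by
  rw [Fam, Finset.filter_image]
  congr 1
  ext c
  simp only [Finset.mem_filter, Finset.mem_sdiff]
  constructor
  · rintro ⟨h1, h2⟩
    exact ⟨h1, fun hE => h2 ((hiff c h1).mpr hE)⟩
  · rintro ⟨h1, h2⟩
    exact ⟨h1, fun hL => h2 ((hiff c h1).mp hL)⟩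

open scoped Classical in
omit hSC hn in
lemma prod_fam_filter {f : Fin n → Fin n} (hf : f ∈ Choices A (CoresF A))
    (L : List (Sym2 (Fin n))) (E : Finset (Fin n))
    (hiff : ∀ c ∈ CoresF A, (s(c, f c) ∈ L ↔ c ∈ E)) :
    ∏ e ∈ (Fam A f).filter (fun e => e ∉ L), cycProd A e
      = ∏ c ∈ CoresF A \ E, A c (f c) * A (f c) c := by
  rw [fam_filter_eq hD hf L E hiff]
  rw [Finset.prod_image]
  · exact Finset.prod_congr rfl (fun c _ => cycProd_mk c (f c))
  · intro x hx y hy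
    exact fam_injOn hD (mem_Choices.mp hf).1
      (Finset.mem_sdiff.mp hx).1 (Finset.mem_sdiff.mp hy).1

open scoped Classical in
lemma mu_core_pend {c₀ p₀ : Fin n} (hc : c₀ ∈ CoresF A) (hp : p₀ ∈ PnbrF A c₀) :
    mu A c₀ p₀ = A c₀ p₀ * ∏ c ∈ (CoresF A).erase c₀, wgt A c := by
  have hmm := maxMatchable_core_pend hD hSC hn hc hp
  have hthe := theChain_core_pend hD hSC hn hc hp
  have hpend : Pendant (DA A) p₀ := (mem_PnbrF.mp hp).1
  rw [mu, beta, if_pos hmm, hthe, pathProd_pair]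
  have hsign : ((-1 : ℝ)) ^ ((([c₀, p₀] : List (Fin n)).length - 2) / 2) = 1 := by norm_num
  rw [hsign, one_mul]
  congr 1
  have hset : (MMset A c₀ p₀).toFinite.toFinset
      = (maxMatchings A).filter (fun M => s(c₀, p₀) ∈ M) := by
    ext M
    rw [Set.Finite.mem_toFinset, mmset_core_pend hD hSC hn hc hp]
    simp [mem_maxMatchings]
  rw [hset]
  have hbb : ∀ M ∈ (maxMatchings A).filter (fun M => s(c₀, p₀) ∈ M),
      betaBar A c₀ p₀ M = ∏ e ∈ M.filter (fun e => e ∉ chainEdges [c₀, p₀]), cycProd A e := by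
    intro M _
    rw [betaBar, hthe]
  rw [Finset.sum_congr rfl hbb]
  rw [sum_max_filter_eq hD hSC hn (fun M => s(c₀, p₀) ∈ M) (fun f => f c₀ = p₀ ∧ True)
    (fun f hf => by simpa using mem_fam_iff hD hf hc hpend)
    (fun M => ∏ e ∈ M.filter (fun e => e ∉ chainEdges [c₀, p₀]), cycProd A e)]
  have hsummand : ∀ f ∈ (Choices A (CoresF A)).filter (fun f => f c₀ = p₀ ∧ True),
      (∏ e ∈ (Fam A f).filter (fun e => e ∉ chainEdges [c₀, p₀]), cycProd A e)
        = ∏ c ∈ (CoresF A).erase c₀, A c (f c) * A (f c) c := by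
    intro f hf
    obtain ⟨hf1, hf2, -⟩ : f ∈ Choices A (CoresF A) ∧ f c₀ = p₀ ∧ True := by
      have h := Finset.mem_filter.mp hf
      exact ⟨h.1, h.2.1, trivial⟩
    rw [prod_fam_filter hD hf1 (chainEdges [c₀, p₀]) {c₀} ?_]
    · rw [Finset.sdiff_singleton_eq_erase]
    · intro c hcm
      rw [chainEdges_pair]
      simp only [List.mem_singleton, Finset.mem_singleton]
      constructor
      · intro heq
        rcases Sym2.eq_iff.mp heq with ⟨h1, -⟩ | ⟨-, h2⟩
        · exact h1
        · exact absurd (h2 ▸ hc) (by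
            rw [mem_CoresF]
            exact not_not.mpr ((mem_PnbrF.mp ((mem_Choices.mp hf1).1 c hcm)).1))
      · rintro rfl
        rw [hf2]
  rw [Finset.sum_congr rfl hsummand]
  rw [choices_fix (CoresF A) hc hp (fun _ => True) (fun _ _ _ => Iff.rfl)
    (fun f => ∏ c ∈ (CoresF A).erase c₀, A c (f c) * A (f c) c) ?_]
  · rw [Finset.filter_true]
    exact choices_sum_prod (fun c x => A c x * A x c) ((CoresF A).erase c₀)
  · intro f g hfg
    exact Finset.prod_congr rfl (fun c hcm => by rw [hfg c (Finset.mem_erase.mp hcm).1])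

end WithHyp
end MuVal
section MuVal2
variable {n : ℕ} {A : Matrix (Fin n) (Fin n) ℝ}
variable (hD : InClassD (DA A)) (hSC : StronglyConnected (DA A)) (hn : 3 ≤ n)
include hD hSC hn

open scoped Classical in
lemma mu_pend_core {c₀ p₀ : Fin n} (hc : c₀ ∈ CoresF A) (hp : p₀ ∈ PnbrF A c₀) :
    mu A p₀ c₀ = A p₀ c₀ * ∏ c ∈ (CoresF A).erase c₀, wgt A c := by
  have hmm := maxMatchable_pend_core hD hSC hn hc hp
  have hthe := theChain_pend_core hD hSC hn hc hp
  have hpend : Pendant (DA A) p₀ := (mem_PnbrF.mp hp).1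
  rw [mu, beta, if_pos hmm, hthe, pathProd_pair]
  have hsign : ((-1 : ℝ)) ^ ((([p₀, c₀] : List (Fin n)).length - 2) / 2) = 1 := by norm_num
  rw [hsign, one_mul]
  congr 1
  have hset : (MMset A p₀ c₀).toFinite.toFinset
      = (maxMatchings A).filter (fun M => s(c₀, p₀) ∈ M) := by
    ext M
    rw [Set.Finite.mem_toFinset, mmset_pend_core hD hSC hn hc hp]
    simp [mem_maxMatchings]
  rw [hset]
  have hbb : ∀ M ∈ (maxMatchings A).filter (fun M => s(c₀, p₀) ∈ M),
      betaBar A p₀ c₀ M = ∏ e ∈ M.filter (fun e => e ∉ chainEdges [p₀, c₀]), cycProd A e := by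
    intro M _
    rw [betaBar, hthe]
  rw [Finset.sum_congr rfl hbb]
  rw [sum_max_filter_eq hD hSC hn (fun M => s(c₀, p₀) ∈ M) (fun f => f c₀ = p₀ ∧ True)
    (fun f hf => by simpa using mem_fam_iff hD hf hc hpend)
    (fun M => ∏ e ∈ M.filter (fun e => e ∉ chainEdges [p₀, c₀]), cycProd A e)]
  have hsummand : ∀ f ∈ (Choices A (CoresF A)).filter (fun f => f c₀ = p₀ ∧ True),
      (∏ e ∈ (Fam A f).filter (fun e => e ∉ chainEdges [p₀, c₀]), cycProd A e)
        = ∏ c ∈ (CoresF A).erase c₀, A c (f c) * A (f c) c := by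
    intro f hf
    have hf1 : f ∈ Choices A (CoresF A) := (Finset.mem_filter.mp hf).1
    have hf2 : f c₀ = p₀ := (Finset.mem_filter.mp hf).2.1
    rw [prod_fam_filter hD hf1 (chainEdges [p₀, c₀]) {c₀} ?_]
    · rw [Finset.sdiff_singleton_eq_erase]
    · intro c hcm
      rw [chainEdges_pair]
      simp only [List.mem_singleton, Finset.mem_singleton]
      constructor
      · intro heq
        rcases Sym2.eq_iff.mp heq with ⟨h1, -⟩ | ⟨h2, -⟩
        · exact absurd (h1 ▸ hpend) (mem_CoresF.mp hcm)
        · exact h2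
      · rintro rfl
        rw [hf2, Sym2.eq_swap]
  rw [Finset.sum_congr rfl hsummand]
  rw [choices_fix (CoresF A) hc hp (fun _ => True) (fun _ _ _ => Iff.rfl)
    (fun f => ∏ c ∈ (CoresF A).erase c₀, A c (f c) * A (f c) c) ?_]
  · rw [Finset.filter_true]
    exact choices_sum_prod (fun c x => A c x * A x c) ((CoresF A).erase c₀)
  · intro f g hfg
    exact Finset.prod_congr rfl (fun c hcm => by rw [hfg c (Finset.mem_erase.mp hcm).1])

open scoped Classical in
lemma mu_pend_pend {p q : Fin n} (hp : Pendant (DA A) p) (hq : Pendant (DA A) q)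
    (hadj : Adjd (DA A) (cOf A p) (cOf A q)) :
    mu A p q = -(A p (cOf A p) * (A (cOf A p) (cOf A q) * A (cOf A q) q))
      * ∏ c ∈ ((CoresF A).erase (cOf A p)).erase (cOf A q), wgt A c := by
  have hcp : cOf A p ∈ CoresF A := cOf_core hD hSC hn hp
  have hcq : cOf A q ∈ CoresF A := cOf_core hD hSC hn hq
  have hpmem : p ∈ PnbrF A (cOf A p) := mem_PnbrF.mpr ⟨hp, (cOf_adj hp).symm'⟩
  have hqmem : q ∈ PnbrF A (cOf A q) := mem_PnbrF.mpr ⟨hq, (cOf_adj hq).symm'⟩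
  have hne : cOf A p ≠ cOf A q := hadj.1
  have hmm := maxMatchable_pend_pend hD hSC hn hp hq hadj
  have hthe := theChain_pend_pend hD hSC hn hp hq hadj
  have hset : (MMset A p q).toFinite.toFinset
      = (maxMatchings A).filter
          (fun M => s(cOf A p, p) ∈ M ∧ s(cOf A q, q) ∈ M) := by
    ext M
    rw [Set.Finite.mem_toFinset, mmset_pend_pend hD hSC hn hp hq hadj]
    simp [mem_maxMatchings]
  have hbb : ∀ M ∈ (maxMatchings A).filter
        (fun M => s(cOf A p, p) ∈ M ∧ s(cOf A q, q) ∈ M),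
      betaBar A p q M
        = ∏ e ∈ M.filter (fun e => e ∉ chainEdges [p, cOf A p, cOf A q, q]), cycProd A e := by
    intro M _
    rw [betaBar, hthe]
  have hsum : ∑ M ∈ (MMset A p q).toFinite.toFinset, betaBar A p q M
      = ∏ c ∈ ((CoresF A).erase (cOf A p)).erase (cOf A q), wgt A c := by
    rw [hset, Finset.sum_congr rfl hbb]
    rw [sum_max_filter_eq hD hSC hn (fun M => s(cOf A p, p) ∈ M ∧ s(cOf A q, q) ∈ M)
      (fun f => f (cOf A p) = p ∧ f (cOf A q) = q)
      (fun f hf => by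
        constructor
        · rintro ⟨h1, h2⟩
          exact ⟨(mem_fam_iff hD hf hcp hp).mp (Sym2.eq_swap ▸ h1),
            (mem_fam_iff hD hf hcq hq).mp (Sym2.eq_swap ▸ h2)⟩
        · rintro ⟨h1, h2⟩
          exact ⟨Sym2.eq_swap ▸ (mem_fam_iff hD hf hcp hp).mpr h1,
            Sym2.eq_swap ▸ (mem_fam_iff hD hf hcq hq).mpr h2⟩)
      (fun M => ∏ e ∈ M.filter (fun e => e ∉ chainEdges [p, cOf A p, cOf A q, q]), cycProd A e)]
    have hsummand : ∀ f ∈ (Choices A (CoresF A)).filter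
          (fun f => f (cOf A p) = p ∧ f (cOf A q) = q),
        (∏ e ∈ (Fam A f).filter (fun e => e ∉ chainEdges [p, cOf A p, cOf A q, q]), cycProd A e)
          = ∏ c ∈ ((CoresF A).erase (cOf A p)).erase (cOf A q), A c (f c) * A (f c) c := by
      intro f hf
      have hf1 : f ∈ Choices A (CoresF A) := (Finset.mem_filter.mp hf).1
      have hf2 : f (cOf A p) = p := (Finset.mem_filter.mp hf).2.1
      have hf3 : f (cOf A q) = q := (Finset.mem_filter.mp hf).2.2
      have hEe : CoresF A \ ({cOf A p, cOf A q} : Finset (Fin n))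
          = ((CoresF A).erase (cOf A p)).erase (cOf A q) := by
        ext x
        simp only [Finset.mem_sdiff, Finset.mem_insert, Finset.mem_singleton, Finset.mem_erase]
        tauto
      rw [prod_fam_filter hD hf1 (chainEdges [p, cOf A p, cOf A q, q]) {cOf A p, cOf A q} ?_]
      · rw [hEe]
      · intro c hcm
        have hcpend : Pendant (DA A) (f c) := (mem_PnbrF.mp ((mem_Choices.mp hf1).1 c hcm)).1
        have hccore : ¬ Pendant (DA A) c := mem_CoresF.mp hcm
        rw [chainEdges_quad]
        simp only [List.mem_cons, List.mem_singleton, List.not_mem_nil, or_false,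
          Finset.mem_insert, Finset.mem_singleton]
        constructor
        · rintro (heq | heq | heq)
          · rcases Sym2.eq_iff.mp heq with ⟨h1, -⟩ | ⟨h1, -⟩
            · exact absurd (h1 ▸ hp) hccore
            · left; exact h1
          · rcases Sym2.eq_iff.mp heq with ⟨-, h2⟩ | ⟨-, h2⟩
            · exact absurd (h2 ▸ hcpend) (mem_CoresF.mp hcq)
            · exact absurd (h2 ▸ hcpend) (mem_CoresF.mp hcp)
          · rcases Sym2.eq_iff.mp heq with ⟨h1, -⟩ | ⟨h2, -⟩
            · right; exact h1
            · exact absurd (h2 ▸ hq) hccore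
        · rintro (rfl | rfl)
          · left; rw [hf2, Sym2.eq_swap]
          · right; right; rw [hf3]
    rw [Finset.sum_congr rfl hsummand]
    rw [choices_fix (CoresF A) hcp hpmem (fun f => f (cOf A q) = q)
      (fun f g hfg => by
        show f (cOf A q) = q ↔ g (cOf A q) = q
        rw [hfg _ (Ne.symm hne)])
      (fun f => ∏ c ∈ ((CoresF A).erase (cOf A p)).erase (cOf A q), A c (f c) * A (f c) c)
      (fun f g hfg => by
        show (∏ c ∈ ((CoresF A).erase (cOf A p)).erase (cOf A q), A c (f c) * A (f c) c)
          = ∏ c ∈ ((CoresF A).erase (cOf A p)).erase (cOf A q), A c (g c) * A (g c) c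
        exact Finset.prod_congr rfl (fun c hcm => by
          rw [hfg c (Finset.mem_erase.mp (Finset.mem_erase.mp hcm).2).1]))]
    have hcq' : cOf A q ∈ (CoresF A).erase (cOf A p) :=
      Finset.mem_erase.mpr ⟨Ne.symm hne, hcq⟩
    have heqfilter : ((Choices A ((CoresF A).erase (cOf A p))).filter
          (fun g => g (cOf A q) = q))
        = ((Choices A ((CoresF A).erase (cOf A p))).filter
          (fun g => g (cOf A q) = q ∧ True)) := by
      simp
    rw [heqfilter]
    rw [choices_fix ((CoresF A).erase (cOf A p)) hcq' hqmem (fun _ => True)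
      (fun _ _ _ => Iff.rfl)
      (fun f => ∏ c ∈ ((CoresF A).erase (cOf A p)).erase (cOf A q), A c (f c) * A (f c) c)
      (fun f g hfg => by
        show (∏ c ∈ ((CoresF A).erase (cOf A p)).erase (cOf A q), A c (f c) * A (f c) c)
          = ∏ c ∈ ((CoresF A).erase (cOf A p)).erase (cOf A q), A c (g c) * A (g c) c
        exact Finset.prod_congr rfl (fun c hcm => by
          rw [hfg c (Finset.mem_erase.mp hcm).1]))]
    rw [Finset.filter_true]
    exact choices_sum_prod (fun c x => A c x * A x c)
      (((CoresF A).erase (cOf A p)).erase (cOf A q))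
  have hsign : ((-1 : ℝ)) ^ ((([p, cOf A p, cOf A q, q] : List (Fin n)).length - 2) / 2)
      = -1 := by norm_num
  rw [mu, beta, if_pos hmm, hthe, pathProd_quad, hsign, hsum]
  ring

lemma not_maxMatchable_core_left {i j : Fin n} (hi : ¬ Pendant (DA A) i)
    (hj : j ∉ PnbrF A i) : ¬ MaxMatchable A i j := by
  rintro ⟨M, hmax, c, hcc, halt⟩
  rcases chain_classification hD hSC hn hmax hcc halt with ⟨-, hmem⟩ | ⟨-, hpend, -⟩
  · obtain ⟨co, pp, heq, hco, hpp⟩ := max_edge_struct hD hSC hn hmax hmem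
    rcases Sym2.eq_iff.mp heq with ⟨h1, h2⟩ | ⟨h1, h2⟩
    · exact hj (h1 ▸ h2 ▸ hpp)
    · exact hi (h1 ▸ (mem_PnbrF.mp hpp).1)
  · exact hi hpend

lemma not_maxMatchable_core_right {i j : Fin n} (hj : ¬ Pendant (DA A) j)
    (hi : i ∉ PnbrF A j) : ¬ MaxMatchable A i j := by
  rintro ⟨M, hmax, c, hcc, halt⟩
  rcases chain_classification hD hSC hn hmax hcc halt with ⟨-, hmem⟩ | ⟨-, -, hpend, -⟩
  · obtain ⟨co, pp, heq, hco, hpp⟩ := max_edge_struct hD hSC hn hmax hmem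
    rcases Sym2.eq_iff.mp heq with ⟨h1, h2⟩ | ⟨h1, h2⟩
    · exact hj (h2 ▸ (mem_PnbrF.mp hpp).1)
    · exact hi (h2 ▸ h1 ▸ hpp)
  · exact hj hpend

lemma not_maxMatchable_pend_pend {p q : Fin n} (hp : Pendant (DA A) p)
    (hq : Pendant (DA A) q) (hnadj : ¬ Adjd (DA A) (cOf A p) (cOf A q)) :
    ¬ MaxMatchable A p q := by
  rintro ⟨M, hmax, c, hcc, halt⟩
  rcases chain_classification hD hSC hn hmax hcc halt with ⟨-, hmem⟩ | ⟨-, -, -, hadj, -⟩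
  · obtain ⟨co, pp, heq, hco, hpp⟩ := max_edge_struct hD hSC hn hmax hmem
    rcases Sym2.eq_iff.mp heq with ⟨h1, -⟩ | ⟨-, h2⟩
    · exact (mem_CoresF.mp (h1 ▸ hco)) hp
    · exact (mem_CoresF.mp (h2 ▸ hco)) hq
  · exact hnadj hadj

end MuVal2
section KeyIdentity
variable {n : ℕ} {A : Matrix (Fin n) (Fin n) ℝ}

lemma finset_erase_comm {α : Type*} [DecidableEq α] (s : Finset α) (a b : α) :
    (s.erase a).erase b = (s.erase b).erase a := by
  ext x
  simp only [Finset.mem_erase]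
  tauto

lemma wgt_def (c : Fin n) : wgt A c = ∑ p ∈ PnbrF A c, A c p * A p c := rfl

variable (hD : InClassD (DA A)) (hSC : StronglyConnected (DA A)) (hn : 3 ≤ n)
include hD hSC hn

omit hSC hn in
lemma A_pend_left {i k : Fin n} (hp : Pendant (DA A) i) (hk : k ≠ cOf A i) : A i k = 0 := by
  by_cases hik : i = k
  · exact hik ▸ diag_zero hD i
  · refine A_eq_zero_of_not_adjd hD (fun hadj => hk ?_)
    exact (cOf_eq hp hadj).symm

omit hSC hn in
lemma A_pend_right {j l : Fin n} (hp : Pendant (DA A) j) (hl : l ≠ cOf A j) : A l j = 0 := by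
  by_cases hlj : l = j
  · rw [hlj]; exact diag_zero hD j
  · refine A_eq_zero_of_not_adjd hD (fun hadj => hl ?_)
    exact (cOf_eq hp hadj.symm').symm

lemma mu_zero_cl {i j : Fin n} (hi : ¬ Pendant (DA A) i) (hj : j ∉ PnbrF A i) :
    mu A i j = 0 := mu_eq_zero (not_maxMatchable_core_left hD hSC hn hi hj)

lemma mu_zero_cr {i j : Fin n} (hj : ¬ Pendant (DA A) j) (hi : i ∉ PnbrF A j) :
    mu A i j = 0 := mu_eq_zero (not_maxMatchable_core_right hD hSC hn hj hi)

lemma mu_zero_pp {p q : Fin n} (hp : Pendant (DA A) p) (hq : Pendant (DA A) q)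
    (hnadj : ¬ Adjd (DA A) (cOf A p) (cOf A q)) : mu A p q = 0 :=
  mu_eq_zero (not_maxMatchable_pend_pend hD hSC hn hp hq hnadj)

/-- The key identity, for `n ≥ 3`. -/
lemma key_identity (i j : Fin n) :
    (∑ k, A i k * mu A k j) = ∑ l, mu A i l * A l j := by
  classical
  by_cases hi : Pendant (DA A) i <;> by_cases hj : Pendant (DA A) j
  · -- Case D : both pendant
    have hci : cOf A i ∈ CoresF A := cOf_core hD hSC hn hi
    have hcj : cOf A j ∈ CoresF A := cOf_core hD hSC hn hj
    have hL : (∑ k, A i k * mu A k j) = A i (cOf A i) * mu A (cOf A i) j := by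
      refine Finset.sum_eq_single_of_mem _ (Finset.mem_univ _) (fun k _ hk => ?_)
      rw [A_pend_left hD hi hk, zero_mul]
    have hR : (∑ l, mu A i l * A l j) = mu A i (cOf A j) * A (cOf A j) j := by
      refine Finset.sum_eq_single_of_mem _ (Finset.mem_univ _) (fun l _ hl => ?_)
      rw [A_pend_right hD hj hl, mul_zero]
    rw [hL, hR]
    by_cases hcc : cOf A i = cOf A j
    · have hjmem : j ∈ PnbrF A (cOf A i) := mem_PnbrF.mpr ⟨hj, hcc ▸ (cOf_adj hj).symm'⟩
      have himem : i ∈ PnbrF A (cOf A j) := mem_PnbrF.mpr ⟨hi, hcc ▸ (cOf_adj hi).symm'⟩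
      rw [mu_core_pend hD hSC hn hci hjmem, mu_pend_core hD hSC hn hcj himem, hcc]
      ring
    · have h1 : mu A (cOf A i) j = 0 := by
        refine mu_zero_cl hD hSC hn (mem_CoresF.mp hci) (fun hmem => ?_)
        exact hcc ((cOf_eq hj (mem_PnbrF.mp hmem).2.symm').symm)
      have h2 : mu A i (cOf A j) = 0 := by
        refine mu_zero_cr hD hSC hn (mem_CoresF.mp hcj) (fun hmem => ?_)
        exact hcc (cOf_eq hi (mem_PnbrF.mp hmem).2.symm')
      rw [h1, h2, mul_zero, zero_mul]
  · -- Case C : i pendant, j core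
    have hci : cOf A i ∈ CoresF A := cOf_core hD hSC hn hi
    have hjc : j ∈ CoresF A := mem_CoresF.mpr hj
    have hL : (∑ k, A i k * mu A k j) = 0 := by
      refine Finset.sum_eq_zero (fun k _ => ?_)
      by_cases hk : k = cOf A i
      · subst hk
        rw [mu_zero_cl hD hSC hn (mem_CoresF.mp hci)
          (fun hmem => hj (mem_PnbrF.mp hmem).1), mul_zero]
      · rw [A_pend_left hD hi hk, zero_mul]
    rw [hL]
    by_cases hadj : Adjd (DA A) (cOf A i) j
    · have hRsub : (∑ l, mu A i l * A l j)
          = ∑ l ∈ insert (cOf A i) (PnbrF A j), mu A i l * A l j := by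
        symm
        refine Finset.sum_subset (Finset.subset_univ _) (fun l _ hl => ?_)
        simp only [Finset.mem_insert] at hl
        push_neg at hl
        obtain ⟨hl1, hl2⟩ := hl
        by_cases hlp : Pendant (DA A) l
        · by_cases hlj : Adjd (DA A) j l
          · exact absurd (mem_PnbrF.mpr ⟨hlp, hlj⟩) hl2
          · rw [A_pend_left hD hlp ?_, mul_zero]
            intro h
            exact hlj ((h ▸ (cOf_adj hlp)).symm')
        · rw [mu_zero_cr hD hSC hn hlp ?_, zero_mul]
          intro hmem
          exact hl1 (cOf_eq hi (mem_PnbrF.mp hmem).2.symm').symm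
      have hnotin : cOf A i ∉ PnbrF A j := fun h =>
        (mem_CoresF.mp hci) (mem_PnbrF.mp h).1
      rw [hRsub, Finset.sum_insert hnotin]
      rw [mu_pend_core hD hSC hn hci (mem_PnbrF.mpr ⟨hi, (cOf_adj hi).symm'⟩)]
      have hterms : ∀ l ∈ PnbrF A j, mu A i l * A l j
          = (-(A i (cOf A i) * A (cOf A i) j
              * ∏ c ∈ ((CoresF A).erase (cOf A i)).erase j, wgt A c)) * (A j l * A l j) := by
        intro l hl
        have hlp : Pendant (DA A) l := (mem_PnbrF.mp hl).1
        have hcl : cOf A l = j := cOf_eq_of_mem_PnbrF hl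
        rw [mu_pend_pend hD hSC hn hi hlp (hcl.symm ▸ hadj), hcl]
        ring
      rw [Finset.sum_congr rfl hterms, ← Finset.mul_sum, ← wgt_def]
      have hjm : j ∈ (CoresF A).erase (cOf A i) := Finset.mem_erase.mpr ⟨hadj.1.symm, hjc⟩
      rw [← Finset.mul_prod_erase _ _ hjm]
      ring
    · symm
      refine Finset.sum_eq_zero (fun l _ => ?_)
      by_cases hlp : Pendant (DA A) l
      · by_cases hlj : l = j
        · subst hlj; exact absurd hlp hj
        · by_cases hadjl : Adjd (DA A) j l
          · have hcl : cOf A l = j := cOf_eq_of_mem_PnbrF (mem_PnbrF.mpr ⟨hlp, hadjl⟩)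
            rw [mu_zero_pp hD hSC hn hi hlp (hcl ▸ hadj), zero_mul]
          · rw [A_pend_left hD hlp (fun h => hadjl ((h ▸ (cOf_adj hlp)).symm')), mul_zero]
      · by_cases hl : l = cOf A i
        · subst hl
          rw [A_eq_zero_of_not_adjd hD hadj, mul_zero]
        · rw [mu_zero_cr hD hSC hn hlp
            (fun hmem => hl (cOf_eq hi (mem_PnbrF.mp hmem).2.symm').symm), zero_mul]
  · -- Case B : i core, j pendant
    have hcj : cOf A j ∈ CoresF A := cOf_core hD hSC hn hj
    have hic : i ∈ CoresF A := mem_CoresF.mpr hi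
    have hR : (∑ l, mu A i l * A l j) = 0 := by
      refine Finset.sum_eq_zero (fun l _ => ?_)
      by_cases hl : l = cOf A j
      · subst hl
        rw [mu_zero_cl hD hSC hn hi (fun hmem => (mem_CoresF.mp hcj) (mem_PnbrF.mp hmem).1),
          zero_mul]
      · rw [A_pend_right hD hj hl, mul_zero]
    rw [hR]
    by_cases hadj : Adjd (DA A) i (cOf A j)
    · have hLsub : (∑ k, A i k * mu A k j)
          = ∑ k ∈ insert (cOf A j) (PnbrF A i), A i k * mu A k j := by
        symm
        refine Finset.sum_subset (Finset.subset_univ _) (fun k _ hk => ?_)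
        simp only [Finset.mem_insert] at hk
        push_neg at hk
        obtain ⟨hk1, hk2⟩ := hk
        by_cases hkp : Pendant (DA A) k
        · by_cases hki : Adjd (DA A) i k
          · exact absurd (mem_PnbrF.mpr ⟨hkp, hki⟩) hk2
          · rw [A_eq_zero_of_not_adjd hD hki, zero_mul]
        · rw [mu_zero_cl hD hSC hn hkp ?_, mul_zero]
          intro hmem
          exact hk1 (cOf_eq hj (mem_PnbrF.mp hmem).2.symm').symm
      have hnotin : cOf A j ∉ PnbrF A i := fun h =>
        (mem_CoresF.mp hcj) (mem_PnbrF.mp h).1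
      rw [hLsub, Finset.sum_insert hnotin]
      rw [mu_core_pend hD hSC hn hcj (mem_PnbrF.mpr ⟨hj, (cOf_adj hj).symm'⟩)]
      have hterms : ∀ k ∈ PnbrF A i, A i k * mu A k j
          = (-(A i (cOf A j) * A (cOf A j) j
              * ∏ c ∈ ((CoresF A).erase i).erase (cOf A j), wgt A c)) * (A i k * A k i) := by
        intro k hk
        have hkp : Pendant (DA A) k := (mem_PnbrF.mp hk).1
        have hck : cOf A k = i := cOf_eq_of_mem_PnbrF hk
        rw [mu_pend_pend hD hSC hn hkp hj (hck.symm ▸ hadj), hck]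
        ring
      rw [Finset.sum_congr rfl hterms, ← Finset.mul_sum, ← wgt_def]
      have him : i ∈ (CoresF A).erase (cOf A j) := Finset.mem_erase.mpr ⟨hadj.1, hic⟩
      rw [← Finset.mul_prod_erase _ _ him, finset_erase_comm]
      ring
    · refine Finset.sum_eq_zero (fun k _ => ?_)
      by_cases hkp : Pendant (DA A) k
      · by_cases hki : k = i
        · subst hki; exact absurd hkp hi
        · by_cases hadjk : Adjd (DA A) i k
          · have hck : cOf A k = i := cOf_eq_of_mem_PnbrF (mem_PnbrF.mpr ⟨hkp, hadjk⟩)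
            rw [mu_zero_pp hD hSC hn hkp hj (hck ▸ hadj), mul_zero]
          · rw [A_eq_zero_of_not_adjd hD hadjk, zero_mul]
      · by_cases hk : k = cOf A j
        · subst hk
          rw [A_eq_zero_of_not_adjd hD hadj, zero_mul]
        · rw [mu_zero_cl hD hSC hn hkp
            (fun hmem => hk (cOf_eq hj (mem_PnbrF.mp hmem).2.symm').symm), mul_zero]
  · -- Case A : both core
    have hic : i ∈ CoresF A := mem_CoresF.mpr hi
    by_cases hij : i = j
    · subst hij
      have hL : (∑ k, A i k * mu A k i)
          = ∑ k ∈ PnbrF A i, A i k * mu A k i := by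
        symm
        refine Finset.sum_subset (Finset.subset_univ _) (fun k _ hk => ?_)
        by_cases hkp : Pendant (DA A) k
        · by_cases hki : Adjd (DA A) i k
          · exact absurd (mem_PnbrF.mpr ⟨hkp, hki⟩) hk
          · rw [A_eq_zero_of_not_adjd hD hki, zero_mul]
        · rw [mu_zero_cr hD hSC hn hi (fun hmem => hk hmem), mul_zero]
      have hR : (∑ l, mu A i l * A l i)
          = ∑ l ∈ PnbrF A i, mu A i l * A l i := by
        symm
        refine Finset.sum_subset (Finset.subset_univ _) (fun l _ hl => ?_)
        rw [mu_zero_cl hD hSC hn hi hl, zero_mul]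
      rw [hL, hR]
      refine Finset.sum_congr rfl (fun k hk => ?_)
      rw [mu_pend_core hD hSC hn hic hk, mu_core_pend hD hSC hn hic hk]
      ring
    · have hL : (∑ k, A i k * mu A k j) = 0 := by
        refine Finset.sum_eq_zero (fun k _ => ?_)
        by_cases hkp : Pendant (DA A) k
        · by_cases hkj : Adjd (DA A) j k
          · have hik : ¬ Adjd (DA A) i k := by
              intro hik
              exact hij (pendant_unique hkp hik.symm' hkj.symm')
            rw [A_eq_zero_of_not_adjd hD hik, zero_mul]
          · rw [mu_zero_cr hD hSC hn hj
              (fun hmem => hkj (mem_PnbrF.mp hmem).2), mul_zero]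
        · rw [mu_zero_cr hD hSC hn hj
            (fun hmem => hkp (mem_PnbrF.mp hmem).1), mul_zero]
      have hR : (∑ l, mu A i l * A l j) = 0 := by
        refine Finset.sum_eq_zero (fun l _ => ?_)
        by_cases hlp : Pendant (DA A) l
        · by_cases hli : Adjd (DA A) i l
          · have hlj : ¬ Adjd (DA A) l j := by
              intro hlj
              exact hij (pendant_unique hlp hli.symm' hlj)
            rw [A_eq_zero_of_not_adjd hD hlj, mul_zero]
          · rw [mu_zero_cl hD hSC hn hi
              (fun hmem => hli (mem_PnbrF.mp hmem).2), zero_mul]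
        · rw [mu_zero_cl hD hSC hn hi
            (fun hmem => hlp (mem_PnbrF.mp hmem).1), zero_mul]
      rw [hL, hR]

end KeyIdentity
section SmallN

lemma n1_false {A : Matrix (Fin 1) (Fin 1) ℝ} (hD : InClassD (DA A)) : False := by
  have hnp : ¬ Pendant (DA A) 0 := by
    rintro ⟨j, hj, -⟩
    exact hj.1 (Subsingleton.elim _ _)
  obtain ⟨j, hj, -⟩ := hD.2 0 hnp
  exact hj.1 (Subsingleton.elim _ _)

variable {A : Matrix (Fin 2) (Fin 2) ℝ} (hD : InClassD (DA A))
include hD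

lemma n2_adj : Adjd (DA A) 0 1 := by
  by_cases hp : Pendant (DA A) 0
  · obtain ⟨j, hj, -⟩ := hp
    fin_cases j
    · exact absurd rfl hj.1
    · exact hj
  · obtain ⟨j, ⟨hj, -⟩⟩ := hD.2 0 hp
    fin_cases j
    · exact absurd rfl hj.1
    · exact hj

lemma n2_edge {e : Sym2 (Fin 2)} (he : IsEdge (DA A) e) : e = s(0, 1) := by
  obtain ⟨i, j, rfl, hadj⟩ := he
  have hne := hadj.1
  fin_cases i <;> fin_cases j
  · exact absurd rfl hne
  · rfl
  · exact Sym2.eq_swap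
  · exact absurd rfl hne

lemma n2_matching_singleton : IsMatching (DA A) {s(0, 1)} := by
  constructor
  · intro e he
    rw [Finset.mem_singleton] at he
    exact ⟨0, 1, he, n2_adj hD⟩
  · intro e he f hf hne
    rw [Finset.mem_singleton] at he hf
    exact absurd (he.trans hf.symm) hne

lemma n2_max_singleton : IsMaxMatching (DA A) {s(0, 1)} := by
  refine ⟨n2_matching_singleton hD, fun M' hM' => ?_⟩
  have hsub : M' ⊆ {s(0, 1)} := fun e he => Finset.mem_singleton.mpr (n2_edge hD (hM'.1 e he))
  simpa using Finset.card_le_card hsub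

lemma n2_max_eq {M : Finset (Sym2 (Fin 2))} (hM : IsMaxMatching (DA A) M) :
    M = {s(0, 1)} := by
  have hsub : M ⊆ {s(0, 1)} := fun e he => Finset.mem_singleton.mpr (n2_edge hD (hM.1.1 e he))
  refine Finset.eq_of_subset_of_card_le hsub ?_
  have := hM.2 {s(0, 1)} (n2_matching_singleton hD)
  simpa using this

omit hD in
lemma n2_chain {i j : Fin 2} {c : List (Fin 2)} (hc : IsCycleChainBtw (DA A) i j c) :
    c = [i, j] := by
  obtain ⟨⟨hnd, hlen, -⟩, hhead, hlast⟩ := hc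
  have hle : c.length ≤ 2 := by
    have := List.Nodup.length_le_card hnd
    simpa using this
  have hlen2 : c.length = 2 := le_antisymm hle hlen
  obtain ⟨a, b, rfl⟩ := List.length_eq_two.mp hlen2
  have ha : a = i := by simpa using hhead
  have hb : b = j := by simpa [List.getLast?] using hlast
  rw [ha, hb]

lemma n2_maxMatchable01 : MaxMatchable A 0 1 :=
  ⟨{s(0, 1)}, n2_max_singleton hD, [0, 1], isCycleChainBtw_pair (n2_adj hD),
    isAltChain_pair (Finset.mem_singleton_self _)⟩

lemma n2_maxMatchable10 : MaxMatchable A 1 0 :=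
  ⟨{s(0, 1)}, n2_max_singleton hD, [1, 0], isCycleChainBtw_pair (n2_adj hD).symm',
    isAltChain_pair (by rw [Sym2.eq_swap]; exact Finset.mem_singleton_self _)⟩

lemma n2_mu01 : mu A 0 1 = A 0 1 := by
  classical
  have hmm := n2_maxMatchable01 hD
  have hthe : theChain A 0 1 = [0, 1] := (n2_chain (theChain_spec hmm).1)
  rw [mu, beta, if_pos hmm, hthe, pathProd_pair]
  have hsign : ((-1 : ℝ)) ^ ((([0, 1] : List (Fin 2)).length - 2) / 2) = 1 := by norm_num
  rw [hsign, one_mul]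
  have hset : (MMset A 0 1).toFinite.toFinset = {({s(0, 1)} : Finset (Sym2 (Fin 2)))} := by
    ext M
    rw [Set.Finite.mem_toFinset, Finset.mem_singleton]
    constructor
    · rintro ⟨hmax, -⟩
      exact n2_max_eq hD hmax
    · rintro rfl
      exact ⟨n2_max_singleton hD, [0, 1], isCycleChainBtw_pair (n2_adj hD),
        isAltChain_pair (Finset.mem_singleton_self _)⟩
  rw [hset, Finset.sum_singleton, betaBar, hthe]
  have hfe : ({s(0, 1)} : Finset (Sym2 (Fin 2))).filter
      (fun e => e ∉ chainEdges [(0 : Fin 2), 1]) = ∅ := by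
    rw [chainEdges_pair, Finset.filter_singleton]
    simp
  rw [hfe, Finset.prod_empty, mul_one]

lemma n2_mu10 : mu A 1 0 = A 1 0 := by
  classical
  have hmm := n2_maxMatchable10 hD
  have hthe : theChain A 1 0 = [1, 0] := (n2_chain (theChain_spec hmm).1)
  rw [mu, beta, if_pos hmm, hthe, pathProd_pair]
  have hsign : ((-1 : ℝ)) ^ ((([1, 0] : List (Fin 2)).length - 2) / 2) = 1 := by norm_num
  rw [hsign, one_mul]
  have hset : (MMset A 1 0).toFinite.toFinset = {({s(0, 1)} : Finset (Sym2 (Fin 2)))} := by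
    ext M
    rw [Set.Finite.mem_toFinset, Finset.mem_singleton]
    constructor
    · rintro ⟨hmax, -⟩
      exact n2_max_eq hD hmax
    · rintro rfl
      exact ⟨n2_max_singleton hD, [1, 0], isCycleChainBtw_pair (n2_adj hD).symm',
        isAltChain_pair (by rw [Sym2.eq_swap]; exact Finset.mem_singleton_self _)⟩
  rw [hset, Finset.sum_singleton, betaBar, hthe]
  have hfe : ({s(0, 1)} : Finset (Sym2 (Fin 2))).filter
      (fun e => e ∉ chainEdges [(1 : Fin 2), 0]) = ∅ := by
    rw [chainEdges_pair, Finset.filter_singleton]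
    simp [Sym2.eq_swap]
  rw [hfe, Finset.prod_empty, mul_one]

lemma n2_key (i j : Fin 2) :
    (∑ k, A i k * mu A k j) = ∑ l, mu A i l * A l j := by
  have h00 : A 0 0 = 0 := diag_zero hD 0
  have h11 : A 1 1 = 0 := diag_zero hD 1
  fin_cases i <;> fin_cases j <;>
    simp [Fin.sum_univ_two, mu_self, n2_mu01 hD, n2_mu10 hD, h00, h11] <;> ring

end SmallN
/-- Lemma 2.6: with `B = (μ_{ij}/Δ_A)`, one has `AB = BA`; equivalently
`Σ_k a_{ik} μ_{kj} = Σ_l μ_{il} a_{lj}` for all `i, j`. -/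
theorem AB_eq_BA {n : ℕ} (A : Matrix (Fin n) (Fin n) ℝ)
    (hD : InClassD (DA A)) (hSC : StronglyConnected (DA A)) (hΔ : Delta A ≠ 0)
    (B : Matrix (Fin n) (Fin n) ℝ) (hB : ∀ i j, B i j = mu A i j / Delta A) :
    A * B = B * A ∧
      ∀ i j, (∑ k, A i k * mu A k j) = ∑ l, mu A i l * A l j := by
  have key : ∀ i j, (∑ k, A i k * mu A k j) = ∑ l, mu A i l * A l j := by
    rcases lt_or_ge n 3 with hlt | hge
    · interval_cases n
      · intro i j; exact i.elim0
      · intro i j; exact absurd hD (fun h => n1_false h)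
      · exact n2_key hD
    · exact key_identity hD hSC hge
  refine ⟨?_, key⟩
  ext i j
  rw [Matrix.mul_apply, Matrix.mul_apply]
  simp only [hB, div_eq_mul_inv]
  have h1 : ∀ k : Fin n, A i k * (mu A k j * (Delta A)⁻¹)
      = (A i k * mu A k j) * (Delta A)⁻¹ := fun k => by ring
  have h2 : ∀ l : Fin n, (mu A i l * (Delta A)⁻¹) * A l j
      = (mu A i l * A l j) * (Delta A)⁻¹ := fun l => by ring
  rw [Finset.sum_congr rfl (fun k _ => h1 k), Finset.sum_congr rfl (fun l _ => h2 l),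
    ← Finset.sum_mul, ← Finset.sum_mul, key i j]
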